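/- arXiv:2111.13200 — 2 statements merged into one kernel-verified Lean document; each statement's English description precedes it below -/
import Mathlib

section
/- For every kernel κ on S and every k ∈ ℕ₀^S, ∑_{r,s∈S} κ(r,s) ∑_{m,m̃∈ℕ₀^S : m + m̃ = k} (∏_{u∈S} k_u!/(m_u! · m̃_u!)) · τ(m;κ) m_r · τ(m̃;κ) m̃_s = 2(|k| − 1) · τ(k;κ). -/
open scoped Classical ENNReal
open Filter MeasureTheory

noncomputable section

/-- The set of ordered pairs `(i,j)` of vertices with `i < j`, representing the
potential edges of a graph on `Fin n`. -/
def upperPairs (n : ℕ) : Finset (Fin n × Fin n) :=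
  Finset.univ.filter fun q => q.1 < q.2

/-- The simple graph on `Fin n` determined by a finite set of (ordered) edges. -/
def graphOf {n : ℕ} (E : Finset (Fin n × Fin n)) : SimpleGraph (Fin n) :=
  SimpleGraph.fromRel fun i j => (i, j) ∈ E

/-- `PConn n x p` is the probability that the inhomogeneous random graph `G(n, x, p)`,
with type vector `x` and independent edges where `{i,j}` is present with probability
`p (x i) (x j)`, is connected; written as a finite sum over connected graphs. -/
def PConn {S : Type*} (n : ℕ) (x : Fin n → S) (p : S → S → ℝ) : ℝ :=
  ∑ E ∈ (upperPairs n).powerset.filter (fun E => (graphOf E).Connected),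
    (∏ q ∈ E, p (x q.1) (x q.2)) * ∏ q ∈ upperPairs n \ E, (1 - p (x q.1) (x q.2))

/-- Sum over all spanning trees (connected graphs with `n - 1` edges) on `Fin n` of the
product of the kernel over the edges. -/
def treeWeight {S : Type*} (n : ℕ) (x : Fin n → S) (κ : S → S → ℝ) : ℝ :=
  ∑ E ∈ (upperPairs n).powerset.filter
      (fun E => (graphOf E).Connected ∧ E.card + 1 = n),
    ∏ q ∈ E, κ (x q.1) (x q.2)

/-- A canonical list of types compatible with the multiplicity vector `k`. -/
def compatList {S : Type*} [Fintype S] (k : S → ℕ) : List S :=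
  (∑ s : S, (k s) • ({s} : Multiset S)).toList

lemma compatList_length {S : Type*} [Fintype S] (k : S → ℕ) :
    (compatList k).length = ∑ s : S, k s := by
  simp [compatList]

/-- A canonical type vector compatible with `k`, i.e. with `∑ i δ_{x i} = k`. -/
def compatVec {S : Type*} [Fintype S] (k : S → ℕ) : Fin (∑ s : S, k s) → S :=
  fun i => (compatList k).get (Fin.cast (compatList_length k).symm i)

/-- `tau κ k` is the spanning-tree weight `τ(k; κ)`. -/
def tau {S : Type*} [Fintype S] (κ : S → S → ℝ) (k : S → ℕ) : ℝ :=
  treeWeight (∑ s : S, k s) (compatVec k) κ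

/-- `pN κN N k` is the probability that the inhomogeneous random graph on a vertex set
with type composition `k` and edge probabilities `min 1 (κN/N)` is connected. -/
def pN {S : Type*} [Fintype S] (κN : S → S → ℝ) (N : ℕ) (k : S → ℕ) : ℝ :=
  PConn (∑ s : S, k s) (compatVec k) fun r s => min 1 (κN r s / N)

/-- Extended-real logarithm, with `elog x = -∞` for `x ≤ 0`. -/
def elog (x : ℝ) : EReal := if x ≤ 0 then (⊥ : EReal) else ((Real.log x : ℝ) : EReal)

/-- The nonnegative part of `-log u`, equal to `∞` if `u ≤ 0`. -/
def negLogPart (u : ℝ) : ℝ≥0∞ := if u ≤ 0 then ⊤ else ENNReal.ofReal (-Real.log u)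

/-- The relative-entropy summand `x log (x / d)` with conventions `0 log 0 = 0` and
`x log (x/0) = +∞` for `x ≠ 0`. -/
def entTerm (x d : ℝ) : EReal :=
  if x = 0 then (0 : EReal) else if d ≤ 0 then (⊤ : EReal)
  else ((x * Real.log (x / d) : ℝ) : EReal)

/-- `‖κ‖_∞ = max_{r,s} κ r s`. -/
def kernelSup {S : Type*} [Fintype S] [Nonempty S] (κ : S → S → ℝ) : ℝ :=
  Finset.univ.sup' Finset.univ_nonempty fun r =>
    Finset.univ.sup' Finset.univ_nonempty fun s => κ r s

/-- `Σ(κ, ν)`, the `ℓ²(ν)`-operator norm of the matrix `(κ r s * ν s)_{r,s}`. -/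
def sigmaOp {S : Type*} [Fintype S] (κ : S → S → ℝ) (ν : S → ℝ) : ℝ :=
  sSup { t : ℝ | ∃ f : S → ℝ, (∀ s, 0 ≤ f s) ∧ (∑ r : S, ν r * f r ^ 2) ≤ 1 ∧
    t = Real.sqrt (∑ r : S, ν r * (∑ s : S, κ r s * f s * ν s) ^ 2) }

/-- Irreducibility of the kernel `κ` with respect to `ν`. -/
def Irred {S : Type*} (κ : S → S → ℝ) (ν : S → ℝ) : Prop :=
  ∀ A : Set S, (∀ r ∈ A, ∀ s, s ∉ A → 0 < ν r → 0 < ν s → κ r s = 0) →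
    (∀ r ∈ A, ν r = 0) ∨ (∀ s, s ∉ A → ν s = 0)

/-- The generating series `Γ_r(θ) = ∑_k τ(k) k_r ∏_s θ_s^{k_s}/k_s! ∈ [0,∞]`. -/
def Gamma0 {S : Type*} [Fintype S] (κ : S → S → ℝ) (θ : S → ℝ) (r : S) : ℝ≥0∞ :=
  ∑' k : S → ℕ,
    ENNReal.ofReal (tau κ k * (k r : ℝ) * ∏ s : S, θ s ^ (k s) / (Nat.factorial (k s) : ℝ))

/-- `χ(κ, θ)`: the infimum over probability vectors `w ≪ θ` of
`∑_r w_r log (w_r / ((κ w)_r θ_r))`. -/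
def chiFn {S : Type*} [Fintype S] (κ : S → S → ℝ) (θ : S → ℝ) : EReal :=
  sInf { v : EReal | ∃ w : S → ℝ, (∀ r, 0 ≤ w r) ∧ ((∑ r : S, w r) = 1) ∧
    (∀ r, θ r = 0 → w r = 0) ∧
    v = ∑ r : S, entTerm (w r) ((∑ s : S, κ r s * w s) * θ r) }

/-- `Δ_r(k)`: the sum over directed spanning trees of the support of `k` rooted at `r`
(encoded as parent maps `f`, edges `(f s, s)` directed away from the root) of
`∏ κ(f s, s) * k (f s)`. -/
def Delta {S : Type*} [Fintype S] [DecidableEq S] (κ : S → S → ℝ) (k : S → ℕ) (r : S) : ℝ :=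
  ∑ f ∈ (Finset.univ : Finset (S → S)).filter (fun f =>
      (∀ s, (s = r ∨ k s = 0) → f s = s) ∧
      ∀ s, 0 < k s → s ≠ r → (0 < k (f s) ∧ ∃ n, f^[n] s = r)),
    ∏ s ∈ Finset.univ.filter (fun s => 0 < k s ∧ s ≠ r), (κ (f s) s * (k (f s) : ℝ))

/-- The reference weight `τ(k) ∏_s μ_s^{k_s}/k_s!`. -/
def rhoMu {S : Type*} [Fintype S] (κ : S → S → ℝ) (μ : S → ℝ) (k : S → ℕ) : ℝ :=
  tau κ k * ∏ s : S, μ s ^ (k s) / (Nat.factorial (k s) : ℝ)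

/-- The microscopic rate function `I_Mi`. -/
def IMi {S : Type*} [Fintype S] (κ : S → S → ℝ) (μ : S → ℝ) (lam : (S → ℕ) → ℝ) : EReal :=
  (∑' k : S → ℕ, entTerm (lam k) (rhoMu κ μ k))
  + ((∑' k : S → ℕ, lam k * (((∑ s : S, k s : ℕ) : ℝ) - 1) : ℝ) : EReal)
  + ((((1 : ℝ)/2) * ∑ r : S, ∑ s : S, (∑' k : S → ℕ, lam k * (k r : ℝ)) * κ r s * μ s : ℝ) : EReal)

/-- The minimizer candidate `λ_k(c) = τ(k) ∏_s (c_s e^{-(κ c)_s})^{k_s}/k_s!`. -/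
def lamC {S : Type*} [Fintype S] (κ : S → S → ℝ) (c : S → ℝ) (k : S → ℕ) : ℝ :=
  tau κ k * ∏ s : S, (c s * Real.exp (-(∑ t : S, κ s t * c t))) ^ (k s) / (Nat.factorial (k s) : ℝ)

/-- The mesoscopic rate function `I_Me`. -/
def IMe {S : Type*} [Fintype S] (κ : S → S → ℝ) (μ ν : S → ℝ) : EReal :=
  (∑ r : S, entTerm (ν r) ((∑ s : S, κ r s * ν s) * μ r))
  + ((((1 : ℝ)/2) * ∑ r : S, ∑ s : S, ν r * κ r s * μ s : ℝ) : EReal)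

/-- `b` is a solution of the fixed-point system for `c`:
`b ∈ [0,∞)^S`, `b ≤ c` and `(κ(c-b))_r b_r = c_r - b_r` for all `r`. -/
def IsFPSol {S : Type*} [Fintype S] (κ : S → S → ℝ) (c b : S → ℝ) : Prop :=
  (∀ r, 0 ≤ b r) ∧ (∀ r, b r ≤ c r) ∧
    ∀ r, (∑ s : S, κ r s * (c s - b s)) * b r = c r - b r

/-- The macroscopic rate summand `f_Ma`. -/
def fMa {S : Type*} [Fintype S] (κ : S → S → ℝ) (μ y : S → ℝ) : EReal :=
  (∑ r : S, entTerm (y r) ((1 - Real.exp (-(∑ s : S, κ r s * y s))) * μ r))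
  + ((((1 : ℝ)/2) * ∑ r : S, ∑ s : S, y r * κ r s * (μ s - y s) : ℝ) : EReal)

/-- The functional `G_c(b)`. -/
def Gc {S : Type*} [Fintype S] (κ : S → S → ℝ) (μ c b : S → ℝ) : EReal :=
  (((∑ r : S, b r * Real.log (b r / μ r))
      - (1/2) * ∑ r : S, ∑ s : S, b r * κ r s * b s
      + (1/2) * ∑ r : S, ∑ s : S, c r * κ r s * μ s : ℝ) : EReal)
  + ∑ r : S, entTerm (c r - b r) ((∑ s : S, κ r s * (c s - b s)) * μ r)

/-- `λ_k(t) = t^{|k|-1} τ(k) e^{-t⟨k,κμ⟩} ∏_r μ_r^{k_r}/k_r!`. -/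
def lamT {S : Type*} [Fintype S] (κ : S → S → ℝ) (μ : S → ℝ) (k : S → ℕ) (t : ℝ) : ℝ :=
  t ^ ((∑ s : S, k s) - 1) * tau κ k *
    Real.exp (-t * ∑ r : S, ∑ s : S, (k r : ℝ) * κ r s * μ s) *
    ∏ r : S, μ r ^ (k r) / (Nat.factorial (k r) : ℝ)




namespace TauRec
variable {n : ℕ}

/-- sorted pair -/
def sp {n : ℕ} (i j : Fin n) : Fin n × Fin n := if i < j then (i, j) else (j, i)

lemma sp_comm (i j : Fin n) : sp i j = sp j i := by
  unfold sp
  rcases lt_trichotomy i j with h | h | h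
  · simp [h, not_lt.2 h.le]
  · simp [h]
  · simp [h, not_lt.2 h.le]

lemma sp_mem_upperPairs {i j : Fin n} (h : i ≠ j) : sp i j ∈ upperPairs n := by
  unfold sp upperPairs
  rcases lt_or_gt_of_ne h with h' | h' <;> simp [h', not_lt.2 h'.le]

lemma sp_eq_self {q : Fin n × Fin n} (h : q.1 < q.2) : sp q.1 q.2 = q := by
  simp [sp, h]

lemma sp_cases (i j : Fin n) : sp i j = (i, j) ∨ sp i j = (j, i) := by
  unfold sp; split <;> simp

lemma mem_upperPairs {q : Fin n × Fin n} : q ∈ upperPairs n ↔ q.1 < q.2 := by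
  simp [upperPairs]

lemma graphOf_adj {E : Finset (Fin n × Fin n)} {u v : Fin n} :
    (graphOf E).Adj u v ↔ u ≠ v ∧ ((u, v) ∈ E ∨ (v, u) ∈ E) := by
  simp [graphOf, SimpleGraph.fromRel_adj]

lemma graphOf_mono {E F : Finset (Fin n × Fin n)} (h : E ⊆ F) : graphOf E ≤ graphOf F := by
  intro u v huv
  rw [graphOf_adj] at huv ⊢
  exact ⟨huv.1, huv.2.imp (@h _) (@h _)⟩

lemma graphOf_adj_of_mem {E : Finset (Fin n × Fin n)} (hE : E ⊆ upperPairs n) {q : Fin n × Fin n}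
    (hq : q ∈ E) : (graphOf E).Adj q.1 q.2 :=
  graphOf_adj.2 ⟨ne_of_lt (mem_upperPairs.1 (hE hq)), Or.inl hq⟩

lemma sp_mem_of_adj {E : Finset (Fin n × Fin n)} {u v : Fin n} (h : (graphOf E).Adj u v)
    (hE : E ⊆ upperPairs n) : sp u v ∈ E := by
  rw [graphOf_adj] at h
  rcases h.2 with h' | h'
  · rwa [sp_eq_self (mem_upperPairs.1 (hE h'))]
  · rw [sp_comm]; rwa [sp_eq_self (mem_upperPairs.1 (hE h'))]



variable {n : ℕ}



/-- Walk surgery: reachability after inserting edge `(i,j)`. -/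
lemma surgery {E : Finset (Fin n × Fin n)} {i j u v : Fin n}
    (h : (graphOf (insert (i, j) E)).Reachable u v) :
    (graphOf E).Reachable u v ∨
      ((graphOf E).Reachable u i ∧ (graphOf E).Reachable j v) ∨
      ((graphOf E).Reachable u j ∧ (graphOf E).Reachable i v) := by
  obtain ⟨p⟩ := h
  induction p with
  | nil => exact Or.inl (SimpleGraph.Reachable.refl _)
  | @cons a b c hab p ih =>
    rw [graphOf_adj] at hab
    obtain ⟨hne, hm | hm⟩ := hab <;> rw [Finset.mem_insert] at hm
    · rcases hm with hm | hm
      · obtain ⟨rfl, rfl⟩ := Prod.ext_iff.1 hm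
        rcases ih with h1 | ⟨h1, h2⟩ | ⟨h1, h2⟩
        · exact Or.inr (Or.inl ⟨SimpleGraph.Reachable.refl _, h1⟩)
        · exact Or.inr (Or.inl ⟨SimpleGraph.Reachable.refl _, h2⟩)
        · exact Or.inl h2
      · have hab' : (graphOf E).Reachable a b :=
          SimpleGraph.Adj.reachable (graphOf_adj.2 ⟨hne, Or.inl hm⟩)
        rcases ih with h1 | ⟨h1, h2⟩ | ⟨h1, h2⟩
        · exact Or.inl (hab'.trans h1)
        · exact Or.inr (Or.inl ⟨hab'.trans h1, h2⟩)
        · exact Or.inr (Or.inr ⟨hab'.trans h1, h2⟩)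
    · rcases hm with hm | hm
      · obtain ⟨rfl, rfl⟩ := Prod.ext_iff.1 hm
        rcases ih with h1 | ⟨h1, h2⟩ | ⟨h1, h2⟩
        · exact Or.inr (Or.inr ⟨SimpleGraph.Reachable.refl _, h1⟩)
        · exact Or.inl h2
        · exact Or.inr (Or.inr ⟨SimpleGraph.Reachable.refl _, h2⟩)
      · have hab' : (graphOf E).Reachable a b :=
          SimpleGraph.Adj.reachable (graphOf_adj.2 ⟨hne, Or.inr hm⟩)
        rcases ih with h1 | ⟨h1, h2⟩ | ⟨h1, h2⟩
        · exact Or.inl (hab'.trans h1)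
        · exact Or.inr (Or.inl ⟨hab'.trans h1, h2⟩)
        · exact Or.inr (Or.inr ⟨hab'.trans h1, h2⟩)

/-- A walk staying in a set closed under adjacency transfers to the edges with first
coordinate in the set. -/
lemma transfer {E : Finset (Fin n × Fin n)} {A : Finset (Fin n)}
    (hcl : ∀ a b : Fin n, (graphOf E).Adj a b → (a ∈ A ↔ b ∈ A)) {u v : Fin n}
    (hu : u ∈ A) (h : (graphOf E).Reachable u v) :
    (graphOf (E.filter (fun q => q.1 ∈ A))).Reachable u v := by
  obtain ⟨p⟩ := h
  induction p with
  | nil => exact SimpleGraph.Reachable.refl _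
  | @cons a b c hab p ih =>
    have hb : b ∈ A := (hcl a b hab).1 hu
    refine SimpleGraph.Reachable.trans (SimpleGraph.Adj.reachable ?_) (ih hb)
    rw [graphOf_adj] at hab ⊢
    refine ⟨hab.1, hab.2.imp (fun hm => ?_) (fun hm => ?_)⟩
    · exact Finset.mem_filter.2 ⟨hm, hu⟩
    · exact Finset.mem_filter.2 ⟨hm, hb⟩

lemma graphOf_empty : graphOf (∅ : Finset (Fin n × Fin n)) = ⊥ := by
  ext u v
  simp [graphOf_adj]

lemma card_comp_bot : Fintype.card (⊥ : SimpleGraph (Fin n)).ConnectedComponent = n := by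
  have : (⊥ : SimpleGraph (Fin n)).ConnectedComponent ≃ Fin n := by
    refine Equiv.ofBijective (fun v => (⊥ : SimpleGraph (Fin n)).connectedComponentMk v)
      ⟨?_, ?_⟩ |>.symm
    · intro a b hab
      exact (SimpleGraph.reachable_bot).1 ((SimpleGraph.ConnectedComponent.eq).1 hab)
    · intro c
      exact c.exists_rep
  rw [Fintype.card_congr this, Fintype.card_fin]

/-- number of components ≥ n - number of edges -/
lemma card_le_card_add_comp (E : Finset (Fin n × Fin n)) :
    n ≤ E.card + Fintype.card (graphOf E).ConnectedComponent := by
  induction E using Finset.induction_on with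
  | empty => simp [graphOf_empty, card_comp_bot]
  | @insert e E he ih =>
    obtain ⟨i, j⟩ := e
    have hle : graphOf E ≤ graphOf (insert (i, j) E) := graphOf_mono (Finset.subset_insert _ _)
    set φ : (graphOf E).ConnectedComponent → (graphOf (insert (i, j) E)).ConnectedComponent :=
      SimpleGraph.ConnectedComponent.map (SimpleGraph.Hom.ofLE hle) with hφ
    classical
    set T : Finset (graphOf E).ConnectedComponent :=
      Finset.univ.erase ((graphOf E).connectedComponentMk j) with hT
    have hinj : Set.InjOn φ (T : Set _) := by
      intro c hc d hd hcd
      rw [Finset.mem_coe, hT, Finset.mem_erase] at hc hd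
      by_contra hne
      obtain ⟨u, rfl⟩ := c.exists_rep
      obtain ⟨v, rfl⟩ := d.exists_rep
      have hr : (graphOf (insert (i, j) E)).Reachable u v := by
        have := hcd
        simp only [hφ, SimpleGraph.ConnectedComponent.map_mk,
          SimpleGraph.Hom.ofLE_apply] at this
        exact (SimpleGraph.ConnectedComponent.eq).1 this
      rcases surgery hr with h1 | ⟨h1, h2⟩ | ⟨h1, h2⟩
      · exact hne (SimpleGraph.ConnectedComponent.sound h1)
      · exact hd.1 (SimpleGraph.ConnectedComponent.sound h2.symm)
      · exact hc.1 (SimpleGraph.ConnectedComponent.sound h1)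
    have hcard : Fintype.card (graphOf E).ConnectedComponent ≤
        Fintype.card (graphOf (insert (i, j) E)).ConnectedComponent + 1 := by
      have h1 : (T.image φ).card ≤ Fintype.card (graphOf (insert (i, j) E)).ConnectedComponent := by
        rw [← Finset.card_univ]
        exact Finset.card_le_univ _
      rw [Finset.card_image_of_injOn hinj] at h1
      have h2 : Fintype.card (graphOf E).ConnectedComponent ≤ T.card + 1 := by
        rw [hT]
        have := Finset.card_erase_add_one
          (Finset.mem_univ ((graphOf E).connectedComponentMk j))
        rw [Finset.card_univ] at this
        omega
      omega
    rw [Finset.card_insert_of_notMem he]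
    omega

/-- A pairwise-reachable set in `graphOf E` has at most `E.card + 1` elements. -/
lemma card_le_of_reachable {E : Finset (Fin n × Fin n)} {A : Finset (Fin n)}
    (h : ∀ a ∈ A, ∀ b ∈ A, (graphOf E).Reachable a b) : A.card ≤ E.card + 1 := by
  rcases Finset.eq_empty_or_nonempty A with rfl | ⟨a₀, ha₀⟩
  · simp
  classical
  have h1 := card_le_card_add_comp E
  have key : Fintype.card (graphOf E).ConnectedComponent + A.card ≤ n + 1 := by
    set f : (graphOf E).ConnectedComponent → Fin n := fun c => c.exists_rep.choose with hf
    have hfc : ∀ c, (graphOf E).connectedComponentMk (f c) = c := fun c => c.exists_rep.choose_spec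
    have hinj : Function.Injective f := fun c d hcd => by
      rw [← hfc c, ← hfc d, hcd]
    have himage : (Finset.univ.image f).card = Fintype.card (graphOf E).ConnectedComponent := by
      rw [Finset.card_image_of_injective _ hinj, Finset.card_univ]
    have hinter : (A ∩ Finset.univ.image f) ⊆
        {f ((graphOf E).connectedComponentMk a₀)} := by
      intro v hv
      rw [Finset.mem_inter, Finset.mem_image] at hv
      obtain ⟨hvA, c, -, rfl⟩ := hv
      have : (graphOf E).connectedComponentMk (f c) = (graphOf E).connectedComponentMk a₀ :=
        SimpleGraph.ConnectedComponent.sound (h _ hvA _ ha₀)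
      rw [hfc] at this
      rw [Finset.mem_singleton, this]
    have hui := Finset.card_union_add_card_inter A (Finset.univ.image f)
    have hu : (A ∪ Finset.univ.image f).card ≤ n := by
      simpa using Finset.card_le_univ (A ∪ Finset.univ.image f)
    have hi : (A ∩ Finset.univ.image f).card ≤ 1 := by
      calc (A ∩ Finset.univ.image f).card
          ≤ ({f ((graphOf E).connectedComponentMk a₀)} : Finset (Fin n)).card :=
            Finset.card_le_card hinter
        _ = 1 := Finset.card_singleton _
    omega
  omega




def within (A : Finset (Fin n)) : Finset (Fin n × Fin n) :=
  (upperPairs n).filter fun q => q.1 ∈ A ∧ q.2 ∈ A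

def IsTreeOn (A : Finset (Fin n)) (D : Finset (Fin n × Fin n)) : Prop :=
  D ⊆ within A ∧ (∀ a ∈ A, ∀ b ∈ A, (graphOf D).Reachable a b) ∧ D.card + 1 = A.card

lemma within_subset (A : Finset (Fin n)) : within A ⊆ upperPairs n :=
  Finset.filter_subset _ _

lemma mem_within {A : Finset (Fin n)} {q : Fin n × Fin n} :
    q ∈ within A ↔ q ∈ upperPairs n ∧ q.1 ∈ A ∧ q.2 ∈ A := Finset.mem_filter

/-- Gluing two trees along a new edge. -/
lemma glue {A : Finset (Fin n)} {i j : Fin n} (hi : i ∈ A) (hj : j ∈ Aᶜ)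
    {D₁ D₂ : Finset (Fin n × Fin n)} (h1 : IsTreeOn A D₁) (h2 : IsTreeOn Aᶜ D₂) :
    insert (sp i j) (D₁ ∪ D₂) ⊆ upperPairs n ∧
      (graphOf (insert (sp i j) (D₁ ∪ D₂))).Connected ∧
      (insert (sp i j) (D₁ ∪ D₂)).card + 1 = n := by
  rw [Finset.mem_compl] at hj
  have hne : i ≠ j := fun h => hj (h ▸ hi)
  set E := insert (sp i j) (D₁ ∪ D₂) with hE
  have hsub : E ⊆ upperPairs n := by
    intro q hq
    rw [hE, Finset.mem_insert, Finset.mem_union] at hq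
    rcases hq with rfl | hq | hq
    · exact sp_mem_upperPairs hne
    · exact within_subset _ (h1.1 hq)
    · exact within_subset _ (h2.1 hq)
  have hD1le : graphOf D₁ ≤ graphOf E := graphOf_mono (by
    intro q hq; rw [hE, Finset.mem_insert, Finset.mem_union]; exact Or.inr (Or.inl hq))
  have hD2le : graphOf D₂ ≤ graphOf E := graphOf_mono (by
    intro q hq; rw [hE, Finset.mem_insert, Finset.mem_union]; exact Or.inr (Or.inr hq))
  have hadj : (graphOf E).Adj i j := by
    rw [graphOf_adj]
    refine ⟨hne, ?_⟩
    rcases sp_cases i j with h | h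
    · exact Or.inl (by rw [← h, hE]; exact Finset.mem_insert_self _ _)
    · exact Or.inr (by rw [← h, hE]; exact Finset.mem_insert_self _ _)
  have hto : ∀ v : Fin n, (graphOf E).Reachable v i := by
    intro v
    by_cases hv : v ∈ A
    · exact (h1.2.1 v hv i hi).mono hD1le
    · have : (graphOf D₂).Reachable v j :=
        h2.2.1 v (Finset.mem_compl.2 hv) j (Finset.mem_compl.2 hj)
      exact (this.mono hD2le).trans hadj.symm.reachable
  have hconn : (graphOf E).Connected := by
    have : Nonempty (Fin n) := ⟨i⟩
    exact SimpleGraph.Connected.mk (fun u v => (hto u).trans (hto v).symm)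
  refine ⟨hsub, hconn, ?_⟩
  have hdisj : Disjoint D₁ D₂ := by
    rw [Finset.disjoint_left]
    intro q hq1 hq2
    have := (mem_within.1 (h1.1 hq1)).2.1
    have := Finset.mem_compl.1 (mem_within.1 (h2.1 hq2)).2.1
    contradiction
  have hspni : sp i j ∉ D₁ ∪ D₂ := by
    rw [Finset.mem_union]
    rintro (hq | hq)
    · have hw := mem_within.1 (h1.1 hq)
      rcases sp_cases i j with h | h
      · rw [h] at hw; exact hj hw.2.2
      · rw [h] at hw; exact hj hw.2.1
    · have hw := mem_within.1 (h2.1 hq)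
      rcases sp_cases i j with h | h
      · rw [h] at hw; exact Finset.mem_compl.1 hw.2.1 hi
      · rw [h] at hw; exact Finset.mem_compl.1 hw.2.2 hi
  have hcardE : E.card = D₁.card + D₂.card + 1 := by
    rw [hE, Finset.card_insert_of_notMem hspni, Finset.card_union_of_disjoint hdisj]
  have hA := h1.2.2
  have hAc := h2.2.2
  have htot : A.card + Aᶜ.card = n := by
    rw [Finset.card_add_card_compl, Fintype.card_fin]
  omega

/-- Splitting a tree at an edge. -/
lemma split {E : Finset (Fin n × Fin n)} (hE : E ⊆ upperPairs n)
    (hconn : (graphOf E).Connected) (hcard : E.card + 1 = n) {i j : Fin n}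
    (hij : (i, j) ∈ E ∨ (j, i) ∈ E) :
    i ∈ Finset.univ.filter (fun v => (graphOf (E.erase (sp i j))).Reachable i v) ∧
    j ∉ Finset.univ.filter (fun v => (graphOf (E.erase (sp i j))).Reachable i v) ∧
    IsTreeOn (Finset.univ.filter (fun v => (graphOf (E.erase (sp i j))).Reachable i v))
      ((E.erase (sp i j)).filter
        (fun q => q.1 ∈ Finset.univ.filter (fun v => (graphOf (E.erase (sp i j))).Reachable i v))) ∧
    IsTreeOn (Finset.univ.filter (fun v => (graphOf (E.erase (sp i j))).Reachable i v))ᶜ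
      ((E.erase (sp i j)).filter
        (fun q => q.1 ∈ (Finset.univ.filter
          (fun v => (graphOf (E.erase (sp i j))).Reachable i v))ᶜ)) := by
  classical
  set e := sp i j with he
  set E' := E.erase e with hE'
  set A := Finset.univ.filter (fun v => (graphOf E').Reachable i v) with hA
  have hmemA : ∀ v, v ∈ A ↔ (graphOf E').Reachable i v := by
    intro v; rw [hA, Finset.mem_filter]; simp
  have hne : i ≠ j := by
    rcases hij with h | h
    · exact ne_of_lt (mem_upperPairs.1 (hE h))
    · exact (ne_of_lt (mem_upperPairs.1 (hE h))).symm
  have heE : e ∈ E := by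
    rcases hij with h | h
    · have := mem_upperPairs.1 (hE h)
      rwa [he, sp_eq_self (q := (i, j)) this]
    · have := mem_upperPairs.1 (hE h)
      rw [he, sp_comm]
      rwa [sp_eq_self (q := (j, i)) this]
  have hEeq : E = insert e E' := (Finset.insert_erase heE).symm
  have hE'card : E'.card + 2 = n := by
    rw [hE', Finset.card_erase_of_mem heE]
    omega
  have hE'sub : E' ⊆ upperPairs n := (Finset.erase_subset _ _).trans hE
  have hcl : ∀ a b : Fin n, (graphOf E').Adj a b → (a ∈ A ↔ b ∈ A) := by
    intro a b hab
    rw [hmemA, hmemA]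
    exact ⟨fun h => h.trans hab.reachable, fun h => h.trans hab.symm.reachable⟩
  have hiA : i ∈ A := (hmemA i).2 (SimpleGraph.Reachable.refl i)
  -- surgery specialized to e
  have hsurg : ∀ u v : Fin n, (graphOf E).Reachable u v →
      (graphOf E').Reachable u v ∨
        ((graphOf E').Reachable u i ∧ (graphOf E').Reachable j v) ∨
        ((graphOf E').Reachable u j ∧ (graphOf E').Reachable i v) := by
    intro u v huv
    rw [hEeq] at huv
    rcases sp_cases i j with hsp | hsp
    · rw [he, hsp] at huv
      exact surgery huv
    · rw [he, hsp] at huv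
      rcases surgery huv with h | ⟨h1, h2⟩ | ⟨h1, h2⟩
      · exact Or.inl h
      · exact Or.inr (Or.inr ⟨h1, h2⟩)
      · exact Or.inr (Or.inl ⟨h1, h2⟩)
  have hjA : j ∉ A := by
    intro hj
    have hrij : (graphOf E').Reachable i j := (hmemA j).1 hj
    have hall : ∀ a ∈ (Finset.univ : Finset (Fin n)), ∀ b ∈ (Finset.univ : Finset (Fin n)),
        (graphOf E').Reachable a b := by
      intro a _ b _
      rcases hsurg a b (hconn.preconnected a b) with h | ⟨h1, h2⟩ | ⟨h1, h2⟩
      · exact h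
      · exact h1.trans (hrij.trans h2)
      · exact h1.trans (hrij.symm.trans h2)
    have := card_le_of_reachable hall
    rw [Finset.card_univ, Fintype.card_fin] at this
    omega
  have hcover : ∀ v, v ∉ A → (graphOf E').Reachable j v := by
    intro v hv
    rcases hsurg i v (hconn.preconnected i v) with h | ⟨h1, h2⟩ | ⟨h1, h2⟩
    · exact absurd ((hmemA v).2 h) hv
    · exact h2
    · exact absurd ((hmemA j).2 h1) hjA
  refine ⟨hiA, hjA, ?_, ?_⟩
  · -- tree on A
    have hreach : ∀ a ∈ A, ∀ b ∈ A,
        (graphOf (E'.filter (fun q => q.1 ∈ A))).Reachable a b := by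
      intro a ha b hb
      exact transfer hcl ha (((hmemA a).1 ha).symm.trans ((hmemA b).1 hb))
    have hsub1 : E'.filter (fun q => q.1 ∈ A) ⊆ within A := by
      intro q hq
      rw [Finset.mem_filter] at hq
      have hq1 : q ∈ upperPairs n := hE'sub hq.1
      have hadj : (graphOf E').Adj q.1 q.2 := graphOf_adj_of_mem hE'sub hq.1
      exact mem_within.2 ⟨hq1, hq.2, (hcl q.1 q.2 hadj).1 hq.2⟩
    have hreach2 : ∀ a ∈ Aᶜ, ∀ b ∈ Aᶜ,
        (graphOf (E'.filter (fun q => q.1 ∈ Aᶜ))).Reachable a b := by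
      intro a ha b hb
      have hcl' : ∀ a b : Fin n, (graphOf E').Adj a b → (a ∈ Aᶜ ↔ b ∈ Aᶜ) := by
        intro a b hab
        rw [Finset.mem_compl, Finset.mem_compl]
        exact not_iff_not.2 (hcl a b hab)
      exact transfer hcl' ha ((hcover a (Finset.mem_compl.1 ha)).symm.trans
        (hcover b (Finset.mem_compl.1 hb)))
    -- cardinalities
    have hb1 : A.card ≤ (E'.filter (fun q => q.1 ∈ A)).card + 1 := card_le_of_reachable hreach
    have hb2 : Aᶜ.card ≤ (E'.filter (fun q => q.1 ∈ Aᶜ)).card + 1 :=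
      card_le_of_reachable hreach2
    have hpart : (E'.filter (fun q => q.1 ∈ A)).card + (E'.filter (fun q => q.1 ∈ Aᶜ)).card
        = E'.card := by
      have hdisj' : Disjoint (E'.filter (fun q => q.1 ∈ A)) (E'.filter (fun q => q.1 ∈ Aᶜ)) := by
        rw [Finset.disjoint_left]
        intro q hq1 hq2
        rw [Finset.mem_filter] at hq1 hq2
        exact Finset.mem_compl.1 hq2.2 hq1.2
      rw [← Finset.card_union_of_disjoint hdisj']
      congr 1
      ext q
      simp only [Finset.mem_union, Finset.mem_filter, Finset.mem_compl]
      tauto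
    have htot : A.card + Aᶜ.card = n := by
      rw [Finset.card_add_card_compl, Fintype.card_fin]
    have hAne : 1 ≤ A.card := Finset.card_pos.2 ⟨i, hiA⟩
    have hAcne : 1 ≤ Aᶜ.card := Finset.card_pos.2 ⟨j, Finset.mem_compl.2 hjA⟩
    exact ⟨hsub1, hreach, by omega⟩
  · -- tree on Aᶜ : same pieces, assembled
    have hcl' : ∀ a b : Fin n, (graphOf E').Adj a b → (a ∈ Aᶜ ↔ b ∈ Aᶜ) := by
      intro a b hab
      rw [Finset.mem_compl, Finset.mem_compl]
      exact not_iff_not.2 (hcl a b hab)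
    have hreach2 : ∀ a ∈ Aᶜ, ∀ b ∈ Aᶜ,
        (graphOf (E'.filter (fun q => q.1 ∈ Aᶜ))).Reachable a b := by
      intro a ha b hb
      exact transfer hcl' ha ((hcover a (Finset.mem_compl.1 ha)).symm.trans
        (hcover b (Finset.mem_compl.1 hb)))
    have hsub2 : E'.filter (fun q => q.1 ∈ Aᶜ) ⊆ within Aᶜ := by
      intro q hq
      rw [Finset.mem_filter] at hq
      have hq1 : q ∈ upperPairs n := hE'sub hq.1
      have hadj : (graphOf E').Adj q.1 q.2 := graphOf_adj_of_mem hE'sub hq.1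
      exact mem_within.2 ⟨hq1, hq.2, (hcl' q.1 q.2 hadj).1 hq.2⟩
    have hreach1 : ∀ a ∈ A, ∀ b ∈ A,
        (graphOf (E'.filter (fun q => q.1 ∈ A))).Reachable a b := by
      intro a ha b hb
      exact transfer hcl ha (((hmemA a).1 ha).symm.trans ((hmemA b).1 hb))
    have hb1 : A.card ≤ (E'.filter (fun q => q.1 ∈ A)).card + 1 := card_le_of_reachable hreach1
    have hb2 : Aᶜ.card ≤ (E'.filter (fun q => q.1 ∈ Aᶜ)).card + 1 :=
      card_le_of_reachable hreach2
    have hpart : (E'.filter (fun q => q.1 ∈ A)).card + (E'.filter (fun q => q.1 ∈ Aᶜ)).card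
        = E'.card := by
      have hdisj' : Disjoint (E'.filter (fun q => q.1 ∈ A)) (E'.filter (fun q => q.1 ∈ Aᶜ)) := by
        rw [Finset.disjoint_left]
        intro q hq1 hq2
        rw [Finset.mem_filter] at hq1 hq2
        exact Finset.mem_compl.1 hq2.2 hq1.2
      rw [← Finset.card_union_of_disjoint hdisj']
      congr 1
      ext q
      simp only [Finset.mem_union, Finset.mem_filter, Finset.mem_compl]
      tauto
    have htot : A.card + Aᶜ.card = n := by
      rw [Finset.card_add_card_compl, Fintype.card_fin]
    have hAne : 1 ≤ A.card := Finset.card_pos.2 ⟨i, hiA⟩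
    have hAcne : 1 ≤ Aᶜ.card := Finset.card_pos.2 ⟨j, Finset.mem_compl.2 hjA⟩
    exact ⟨hsub2, hreach2, by omega⟩



-- === composition layer ===
end TauRec





namespace TauRec
variable {S : Type*} [Fintype S] {n : ℕ}

/-- composition (type counts) of `x` restricted to `A` -/
def compOf (x : Fin n → S) (A : Finset (Fin n)) : S → ℕ :=
  fun u => (A.filter (fun i => x i = u)).card

lemma compOf_count (x : Fin n → S) (A : Finset (Fin n)) (u : S) :
    compOf x A u = Multiset.count u (A.val.map x) := by
  classical
  rw [Multiset.count_map, compOf, Finset.card_def, Finset.filter_val]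
  congr 1
  apply Multiset.filter_congr
  intro i _
  exact ⟨fun h => h.symm, fun h => h.symm⟩

lemma sum_compOf (x : Fin n → S) (A : Finset (Fin n)) :
    ∑ u : S, compOf x A u = A.card :=
  (Finset.card_eq_sum_card_fiberwise (fun i _ => Finset.mem_univ (x i))).symm

lemma compOf_mono (x : Fin n → S) (A : Finset (Fin n)) (u : S) :
    compOf x A u ≤ compOf x Finset.univ u :=
  Finset.card_le_card (Finset.filter_subset_filter _ (Finset.subset_univ A))

lemma compOf_univ_compatVec (k : S → ℕ) :
    compOf (compatVec k) Finset.univ = k := by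
  classical
  funext u
  rw [compOf_count]
  have h1 : (Finset.univ.val.map (compatVec k)) = (compatList k : Multiset S) := by
    rw [Fin.univ_val_map]
    have := List.ofFn_congr (compatList_length k).symm (compatVec k)
    rw [this]
    have : (fun i : Fin (compatList k).length =>
        compatVec k (Fin.cast (compatList_length k) i)) = (compatList k).get := by
      funext i
      simp [compatVec]
    rw [this, List.ofFn_get]
  rw [h1, compatList, Multiset.coe_toList]
  rw [Multiset.count_sum']
  simp only [Multiset.count_nsmul, Multiset.count_singleton, mul_ite, mul_one, mul_zero]
  rw [Finset.sum_ite_eq]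
  simp

/-- compositions of complements add up -/
lemma compOf_compl (x : Fin n → S) (A : Finset (Fin n)) (u : S) :
    compOf x A u + compOf x Aᶜ u = compOf x Finset.univ u := by
  rw [compOf, compOf, compOf, ← Finset.card_union_of_disjoint]
  · congr 1
    rw [← Finset.filter_union]
    congr 1
    simp [Finset.union_compl]
  · exact Finset.disjoint_filter_filter (disjoint_compl_right)

/-- enumeration of `A` matching the canonical vector of its composition -/
lemma exists_enum (x : Fin n → S) (A : Finset (Fin n)) :
    ∃ g : Fin (∑ u : S, compOf x A u) → Fin n,
      Function.Injective g ∧ (∀ i, g i ∈ A) ∧ (∀ a ∈ A, ∃ i, g i = a) ∧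
      ∀ i, x (g i) = compatVec (compOf x A) i := by
  classical
  set m := compOf x A with hm
  set N := ∑ u : S, m u with hN
  set y := compatVec m with hy
  have hfib : ∀ u : S, (Finset.univ.filter (fun i : Fin N => y i = u)).card
      = (A.filter (fun i => x i = u)).card := by
    intro u
    have h1 : (Finset.univ.filter (fun i : Fin N => y i = u)).card = compOf y Finset.univ u := rfl
    rw [h1, hy, hm]
    rw [show compOf (compatVec (compOf x A)) Finset.univ = compOf x A from
      compOf_univ_compatVec _]
    rfl
  set e : ∀ u : S, {i : Fin N // i ∈ Finset.univ.filter (fun i : Fin N => y i = u)} ≃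
      {a : Fin n // a ∈ A.filter (fun i => x i = u)} :=
    fun u => Finset.equivOfCardEq (hfib u) with he
  have hmem : ∀ i : Fin N, i ∈ Finset.univ.filter (fun j : Fin N => y j = y i) := by
    intro i; simp
  set g : Fin N → Fin n := fun i => ((e (y i)) ⟨i, hmem i⟩ : Fin n) with hg
  have hcast : ∀ (u : S) (i : Fin N) (h : y i = u)
      (hmem' : i ∈ Finset.univ.filter (fun j : Fin N => y j = u)),
      g i = ((e u) ⟨i, hmem'⟩ : Fin n) := by
    intro u i h hmem'
    subst h
    rfl
  have hgfib : ∀ i : Fin N, g i ∈ A.filter (fun a => x a = y i) := fun i => ((e (y i)) ⟨i, hmem i⟩).2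
  have hgA : ∀ i, g i ∈ A := fun i => (Finset.mem_filter.1 (hgfib i)).1
  have hgx : ∀ i, x (g i) = y i := fun i => (Finset.mem_filter.1 (hgfib i)).2
  refine ⟨g, ?_, hgA, ?_, hgx⟩
  · intro i i' hii'
    have heq : y i = y i' := by rw [← hgx i, ← hgx i', hii']
    have h1 : g i = ((e (y i')) ⟨i, by simp [heq]⟩ : Fin n) := hcast (y i') i heq _
    have h2 : g i' = ((e (y i')) ⟨i', hmem i'⟩ : Fin n) := rfl
    have h3 : ((e (y i')) ⟨i, by simp [heq]⟩ : {a : Fin n // a ∈ A.filter (fun j => x j = y i')})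
        = (e (y i')) ⟨i', hmem i'⟩ := by
      apply Subtype.ext
      rw [← h1, ← h2, hii']
    have := (e (y i')).injective h3
    exact congrArg Subtype.val this
  · intro a ha
    set u := x a with hu
    have hafib : a ∈ A.filter (fun i => x i = u) := Finset.mem_filter.2 ⟨ha, rfl⟩
    set i0 : {i : Fin N // i ∈ Finset.univ.filter (fun j : Fin N => y j = u)} :=
      (e u).symm ⟨a, hafib⟩ with hi0
    have hiu : y (i0 : Fin N) = u := by
      have := i0.2
      rw [Finset.mem_filter] at this
      exact this.2
    refine ⟨(i0 : Fin N), ?_⟩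
    have h1 : g (i0 : Fin N) = ((e u) ⟨(i0 : Fin N), by simp [hiu]⟩ : Fin n) := hcast u _ hiu _
    have h2 : (⟨(i0 : Fin N), by simp [hiu]⟩ : {j : Fin N // j ∈ Finset.univ.filter
        (fun j : Fin N => y j = u)}) = i0 := Subtype.ext rfl
    rw [h1, h2, hi0, Equiv.apply_symm_apply]

end TauRec

-- === treeWeight / tau and the transfer lemma ===


namespace TauRec
variable {S : Type*} [Fintype S] {n : ℕ}

lemma sp_eq_sp {m : ℕ} {u v u' v' : Fin m} (h : sp u v = sp u' v') :
    (u = u' ∧ v = v') ∨ (u = v' ∧ v = u') := by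
  unfold sp at h
  split_ifs at h <;> rw [Prod.ext_iff] at h <;>
    [exact Or.inl h; exact Or.inr h; exact Or.inr ⟨h.2, h.1⟩; exact Or.inl ⟨h.2, h.1⟩]

/-- The weighted sum over trees on a subset `A`. -/
def TOn (κ : S → S → ℝ) (x : Fin n → S) (A : Finset (Fin n)) : ℝ :=
  ∑ D ∈ Finset.univ.filter (fun D => IsTreeOn A D), ∏ q ∈ D, κ (x q.1) (x q.2)

lemma TOn_eq_tau (κ : S → S → ℝ) (hκsym : ∀ r s, κ r s = κ s r) (x : Fin n → S)
    (A : Finset (Fin n)) : TOn κ x A = tau κ (compOf x A) := by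
  classical
  set m := compOf x A with hm
  set N := ∑ u : S, m u with hN
  have hNA : N = A.card := by rw [hN, hm, sum_compOf]
  set y := compatVec m with hy
  rw [TOn, tau, treeWeight]
  rcases Finset.eq_empty_or_nonempty A with rfl | hAne
  · rw [Finset.sum_eq_zero, Finset.sum_eq_zero]
    · intro E hE
      rw [Finset.mem_filter] at hE
      have : Nonempty (Fin (∑ s : S, m s)) := hE.2.1.nonempty
      have : 0 < ∑ s : S, m s := Fin.pos_iff_nonempty.2 this
      rw [← hN, hNA] at this
      simp at this
    · intro D hD
      rw [Finset.mem_filter] at hD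
      have := hD.2.2.2
      simp at this
  · -- A nonempty
    obtain ⟨g, hginj, hgA, hgsurj, hgx⟩ := exists_enum x A
    have hNpos : 0 < N := by rw [hNA]; exact Finset.card_pos.2 hAne
    have : Nonempty (Fin N) := Fin.pos_iff_nonempty.1 hNpos
    set g' : Fin n → Fin N := Function.invFun g with hg'
    have hg'g : ∀ i, g' (g i) = i := fun i => Function.leftInverse_invFun hginj i
    have hgg' : ∀ a ∈ A, g (g' a) = a := by
      intro a ha
      obtain ⟨i, hi⟩ := hgsurj a ha
      exact Function.invFun_eq ⟨i, hi⟩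
    have hg'inj : ∀ a ∈ A, ∀ b ∈ A, g' a = g' b → a = b := by
      intro a ha b hb hab
      rw [← hgg' a ha, ← hgg' b hb, hab]
    -- forward and backward edge maps
    set Φ : Finset (Fin N × Fin N) → Finset (Fin n × Fin n) :=
      fun E => E.image (fun q => sp (g q.1) (g q.2)) with hΦ
    set Ψ : Finset (Fin n × Fin n) → Finset (Fin N × Fin N) :=
      fun D => D.image (fun q => sp (g' q.1) (g' q.2)) with hΨ
    have hΦinj : ∀ E : Finset (Fin N × Fin N), E ⊆ upperPairs N →
        Set.InjOn (fun q : Fin N × Fin N => sp (g q.1) (g q.2)) E := by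
      intro E hE q hq q' hq' hqq'
      have h1 : q.1 < q.2 := mem_upperPairs.1 (hE hq)
      have h2 : q'.1 < q'.2 := mem_upperPairs.1 (hE hq')
      rcases sp_eq_sp hqq' with ⟨ha, hb⟩ | ⟨ha, hb⟩
      · exact Prod.ext (hginj ha) (hginj hb)
      · exact absurd (hginj ha ▸ hginj hb ▸ h2) (by rw [← hginj ha, ← hginj hb] at h2; omega)
    have hΨinj : ∀ D : Finset (Fin n × Fin n), D ⊆ within A →
        Set.InjOn (fun q : Fin n × Fin n => sp (g' q.1) (g' q.2)) D := by
      intro D hD q hq q' hq' hqq'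
      have hw := mem_within.1 (hD hq)
      have hw' := mem_within.1 (hD hq')
      have h1 : q.1 < q.2 := mem_upperPairs.1 hw.1
      have h2 : q'.1 < q'.2 := mem_upperPairs.1 hw'.1
      rcases sp_eq_sp hqq' with ⟨ha, hb⟩ | ⟨ha, hb⟩
      · exact Prod.ext (hg'inj _ hw.2.1 _ hw'.2.1 ha) (hg'inj _ hw.2.2 _ hw'.2.2 hb)
      · have e1 : q.1 = q'.2 := hg'inj _ hw.2.1 _ hw'.2.2 ha
        have e2 : q.2 = q'.1 := hg'inj _ hw.2.2 _ hw'.2.1 hb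
        rw [e1, e2] at h1
        exact absurd h2 (by omega)
    have hg'ne : ∀ a ∈ A, ∀ b ∈ A, a ≠ b → g' a ≠ g' b := by
      intro a ha b hb hab h
      exact hab (hg'inj a ha b hb h)
    have hyg' : ∀ a ∈ A, compatVec m (g' a) = x a := by
      intro a ha
      have h := hgx (g' a)
      rw [hgg' a ha] at h
      exact h.symm
    refine Finset.sum_nbij' Ψ Φ ?_ ?_ ?_ ?_ ?_
    · -- Ψ maps trees-on-A to tree edge sets on Fin N
      intro D hD
      rw [Finset.mem_filter] at hD
      obtain ⟨-, hDsub, hDreach, hDcard⟩ := hD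
      have hne : ∀ q ∈ D, (g' q.1 ≠ g' q.2) := by
        intro q hq
        have hw := mem_within.1 (hDsub hq)
        exact hg'ne _ hw.2.1 _ hw.2.2 (ne_of_lt (mem_upperPairs.1 hw.1))
      have hsub : Ψ D ⊆ upperPairs N := by
        intro q' hq'
        rw [hΨ, Finset.mem_image] at hq'
        obtain ⟨q, hq, rfl⟩ := hq'
        exact sp_mem_upperPairs (hne q hq)
      have hhom : ∀ a b : Fin n, (graphOf D).Adj a b → (graphOf (Ψ D)).Adj (g' a) (g' b) := by
        intro a b hab
        rw [graphOf_adj] at hab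
        obtain ⟨hne', hm | hm⟩ := hab
        · have hw := mem_within.1 (hDsub hm)
          have : sp (g' a) (g' b) ∈ Ψ D := by
            rw [hΨ, Finset.mem_image]; exact ⟨(a, b), hm, rfl⟩
          rw [graphOf_adj]
          refine ⟨hg'ne _ hw.2.1 _ hw.2.2 hne', ?_⟩
          rcases sp_cases (g' a) (g' b) with h | h <;> rw [h] at this
          · exact Or.inl this
          · exact Or.inr this
        · have hw := mem_within.1 (hDsub hm)
          have : sp (g' b) (g' a) ∈ Ψ D := by
            rw [hΨ, Finset.mem_image]; exact ⟨(b, a), hm, rfl⟩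
          rw [sp_comm] at this
          rw [graphOf_adj]
          refine ⟨hg'ne _ hw.2.2 _ hw.2.1 hne', ?_⟩
          rcases sp_cases (g' a) (g' b) with h | h <;> rw [h] at this
          · exact Or.inl this
          · exact Or.inr this
      have hconn : (graphOf (Ψ D)).Connected := by
        refine SimpleGraph.Connected.mk ?_
        intro u v
        have : (graphOf D).Reachable (g u) (g v) := hDreach _ (hgA u) _ (hgA v)
        have h3 : (graphOf (Ψ D)).Reachable (g' (g u)) (g' (g v)) :=
          this.map (⟨g', fun hab => hhom _ _ hab⟩ : graphOf D →g graphOf (Ψ D))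
        rw [hg'g, hg'g] at h3
        exact h3
      rw [Finset.mem_filter, Finset.mem_powerset]
      refine ⟨hsub, hconn, ?_⟩
      rw [hΨ, Finset.card_image_of_injOn (hΨinj D hDsub)]
      omega
    · -- Φ maps tree edge sets on Fin N to trees-on-A
      intro E hE
      rw [Finset.mem_filter, Finset.mem_powerset] at hE
      obtain ⟨hEsub, hEconn, hEcard⟩ := hE
      have hgne : ∀ q ∈ E, g q.1 ≠ g q.2 := by
        intro q hq h
        exact absurd (hginj h) (ne_of_lt (mem_upperPairs.1 (hEsub hq)))
      have hsub : Φ E ⊆ within A := by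
        intro q' hq'
        rw [hΦ, Finset.mem_image] at hq'
        obtain ⟨q, hq, rfl⟩ := hq'
        refine mem_within.2 ⟨sp_mem_upperPairs (hgne q hq), ?_⟩
        rcases sp_cases (g q.1) (g q.2) with h | h <;> rw [h] <;>
          exact ⟨hgA _, hgA _⟩
      have hhom : ∀ u v : Fin N, (graphOf E).Adj u v → (graphOf (Φ E)).Adj (g u) (g v) := by
        intro u v huv
        rw [graphOf_adj] at huv
        obtain ⟨hne', hm | hm⟩ := huv
        · have : sp (g u) (g v) ∈ Φ E := by
            rw [hΦ, Finset.mem_image]; exact ⟨(u, v), hm, rfl⟩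
          rw [graphOf_adj]
          refine ⟨fun h => hne' (hginj h), ?_⟩
          rcases sp_cases (g u) (g v) with h | h <;> rw [h] at this
          · exact Or.inl this
          · exact Or.inr this
        · have : sp (g v) (g u) ∈ Φ E := by
            rw [hΦ, Finset.mem_image]; exact ⟨(v, u), hm, rfl⟩
          rw [sp_comm] at this
          rw [graphOf_adj]
          refine ⟨fun h => hne' (hginj h), ?_⟩
          rcases sp_cases (g u) (g v) with h | h <;> rw [h] at this
          · exact Or.inl this
          · exact Or.inr this
      have hreach : ∀ a ∈ A, ∀ b ∈ A, (graphOf (Φ E)).Reachable a b := by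
        intro a ha b hb
        obtain ⟨u, rfl⟩ := hgsurj a ha
        obtain ⟨v, rfl⟩ := hgsurj b hb
        exact (hEconn.preconnected u v).map (⟨g, fun hab => hhom _ _ hab⟩ :
          graphOf E →g graphOf (Φ E))
      rw [Finset.mem_filter]
      refine ⟨Finset.mem_univ _, hsub, hreach, ?_⟩
      rw [hΦ, Finset.card_image_of_injOn (hΦinj E hEsub)]
      omega
    · -- Φ ∘ Ψ = id on trees-on-A
      intro D hD
      rw [Finset.mem_filter] at hD
      obtain ⟨-, hDsub, -, -⟩ := hD
      show Finset.image (fun q : Fin N × Fin N => sp (g q.1) (g q.2))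
          (Finset.image (fun q : Fin n × Fin n => sp (g' q.1) (g' q.2)) D) = D
      rw [Finset.image_image]
      refine Eq.trans (Finset.image_congr ?_) Finset.image_id
      intro q hq
      simp only [Function.comp_apply, id_eq]
      have hw := mem_within.1 (hDsub hq)
      have hlt : q.1 < q.2 := mem_upperPairs.1 hw.1
      rcases sp_cases (g' q.1) (g' q.2) with h | h <;> rw [h] <;> dsimp only
      · rw [hgg' _ hw.2.1, hgg' _ hw.2.2]
        exact sp_eq_self hlt
      · rw [hgg' _ hw.2.1, hgg' _ hw.2.2, sp_comm]
        exact sp_eq_self hlt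
    · -- Ψ ∘ Φ = id on trees on Fin N
      intro E hE
      rw [Finset.mem_filter, Finset.mem_powerset] at hE
      obtain ⟨hEsub, -, -⟩ := hE
      show Finset.image (fun q : Fin n × Fin n => sp (g' q.1) (g' q.2))
          (Finset.image (fun q : Fin N × Fin N => sp (g q.1) (g q.2)) E) = E
      rw [Finset.image_image]
      refine Eq.trans (Finset.image_congr ?_) Finset.image_id
      intro q hq
      simp only [Function.comp_apply, id_eq]
      have hlt : q.1 < q.2 := mem_upperPairs.1 (hEsub hq)
      rcases sp_cases (g q.1) (g q.2) with h | h <;> rw [h] <;> dsimp only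
      · rw [hg'g, hg'g]
        exact sp_eq_self hlt
      · rw [hg'g, hg'g, sp_comm]
        exact sp_eq_self hlt
    · -- weights agree
      intro D hD
      rw [Finset.mem_filter] at hD
      obtain ⟨-, hDsub, -, -⟩ := hD
      rw [hΨ, Finset.prod_image (hΨinj D hDsub)]
      apply Finset.prod_congr rfl
      intro q hq
      have hw := mem_within.1 (hDsub hq)
      rcases sp_cases (g' q.1) (g' q.2) with h | h <;> rw [h]
      · simp only
        rw [hyg' _ hw.2.1, hyg' _ hw.2.2]
      · simp only
        rw [hyg' _ hw.2.1, hyg' _ hw.2.2]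
        exact hκsym _ _

end TauRec

namespace TauRec
variable {S : Type*} [Fintype S] {n : ℕ}

lemma reach_closed {E : Finset (Fin n × Fin n)} {A : Finset (Fin n)}
    (hcl : ∀ a b : Fin n, (graphOf E).Adj a b → (a ∈ A ↔ b ∈ A)) {u v : Fin n}
    (hu : u ∈ A) (h : (graphOf E).Reachable u v) : v ∈ A := by
  obtain ⟨p⟩ := h
  induction p with
  | nil => exact hu
  | @cons a b c hab p ih => exact ih ((hcl a b hab).1 hu)

lemma filter_fst_partition (E : Finset (Fin n × Fin n)) (A : Finset (Fin n)) :
    E.filter (fun q => q.1 ∈ A) ∪ E.filter (fun q => q.1 ∈ Aᶜ) = E := by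
  ext q
  simp only [Finset.mem_union, Finset.mem_filter, Finset.mem_compl]
  tauto

lemma count_dirEdges {E : Finset (Fin n × Fin n)} (hE : E ⊆ upperPairs n) :
    (Finset.univ.filter (fun q : Fin n × Fin n => q.1 ≠ q.2 ∧ sp q.1 q.2 ∈ E)).card
      = 2 * E.card := by
  classical
  have hset : Finset.univ.filter (fun q : Fin n × Fin n => q.1 ≠ q.2 ∧ sp q.1 q.2 ∈ E)
      = E ∪ E.image Prod.swap := by
    ext q
    simp only [Finset.mem_filter, Finset.mem_univ, true_and, Finset.mem_union, Finset.mem_image]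
    constructor
    · rintro ⟨hne, hsp⟩
      rcases lt_or_gt_of_ne hne with h | h
      · rw [sp_eq_self h] at hsp
        exact Or.inl hsp
      · rw [sp_comm, sp_eq_self (show (q.2, q.1).1 < (q.2, q.1).2 from h)] at hsp
        exact Or.inr ⟨(q.2, q.1), hsp, by simp⟩
    · rintro (hq | ⟨p, hp, rfl⟩)
      · have h := mem_upperPairs.1 (hE hq)
        exact ⟨ne_of_lt h, by rw [sp_eq_self h]; exact hq⟩
      · have h := mem_upperPairs.1 (hE hp)
        refine ⟨ne_of_gt (by simpa using h), ?_⟩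
        rw [show (p.swap.1 : Fin n) = p.2 from rfl, show (p.swap.2 : Fin n) = p.1 from rfl,
          sp_comm, sp_eq_self h]
        exact hp
  rw [hset, Finset.card_union_of_disjoint, Finset.card_image_of_injective _ Prod.swap_injective]
  · omega
  · rw [Finset.disjoint_left]
    intro q hq hq'
    rw [Finset.mem_image] at hq'
    obtain ⟨p, hp, rfl⟩ := hq'
    have h1 := mem_upperPairs.1 (hE hp)
    have h2 := mem_upperPairs.1 (hE hq)
    simp only [Prod.fst_swap, Prod.snd_swap] at h2
    omega

lemma TOn_univ (κ : S → S → ℝ) (x : Fin n → S) :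
    TOn κ x Finset.univ = treeWeight n x κ := by
  classical
  rw [TOn, treeWeight]
  rcases Nat.eq_zero_or_pos n with rfl | hn
  · rw [Finset.sum_eq_zero, Finset.sum_eq_zero]
    · intro E hE
      rw [Finset.mem_filter] at hE
      have : Nonempty (Fin 0) := hE.2.1.nonempty
      simp [Fin.pos_iff_nonempty.2 this] at *
    · intro D hD
      rw [Finset.mem_filter] at hD
      have := hD.2.2.2
      simp at this
  · apply Finset.sum_congr
    · ext D
      rw [Finset.mem_filter, Finset.mem_filter, Finset.mem_powerset]
      constructor
      · rintro ⟨-, hsub, hreach, hcard⟩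
        have hsub' : D ⊆ upperPairs n := (fun q hq => (mem_within.1 (hsub hq)).1)
        have : Nonempty (Fin n) := Fin.pos_iff_nonempty.1 hn
        refine ⟨hsub', SimpleGraph.Connected.mk
          (fun u v => hreach u (Finset.mem_univ u) v (Finset.mem_univ v)), ?_⟩
        rw [Finset.card_univ, Fintype.card_fin] at hcard
        exact hcard
      · rintro ⟨hsub, hconn, hcard⟩
        refine ⟨Finset.mem_univ _, ?_, ?_, ?_⟩
        · intro q hq
          exact mem_within.2 ⟨hsub hq, Finset.mem_univ _, Finset.mem_univ _⟩
        · intro a _ b _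
          exact hconn.preconnected a b
        · rw [Finset.card_univ, Fintype.card_fin]
          exact hcard
    · intros; rfl

/-- The flattened left-hand sum. -/
def Lsum (κ : S → S → ℝ) (x : Fin n → S) : ℝ :=
  ∑ t ∈ (Finset.univ : Finset (Finset (Fin n) × (Fin n × Fin n) ×
      Finset (Fin n × Fin n) × Finset (Fin n × Fin n))).filter
      (fun t => t.2.1.1 ∈ t.1 ∧ t.2.1.2 ∈ t.1ᶜ ∧ IsTreeOn t.1 t.2.2.1 ∧ IsTreeOn t.1ᶜ t.2.2.2),
    κ (x t.2.1.1) (x t.2.1.2) * (∏ q ∈ t.2.2.1, κ (x q.1) (x q.2)) *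
      (∏ q ∈ t.2.2.2, κ (x q.1) (x q.2))

lemma stepII (κ : S → S → ℝ) (hκsym : ∀ r s, κ r s = κ s r) (x : Fin n → S) :
    Lsum κ x = 2 * ((n : ℝ) - 1) * treeWeight n x κ := by
  classical
  set w : Finset (Fin n × Fin n) → ℝ := fun E => ∏ q ∈ E, κ (x q.1) (x q.2) with hw
  set tc : Finset (Fin n × Fin n) → Prop :=
    fun E => E ⊆ upperPairs n ∧ (graphOf E).Connected ∧ E.card + 1 = n with htc
  -- step 1: flattened right-hand sum
  have hR : ∑ t ∈ (Finset.univ : Finset (Finset (Fin n × Fin n) × (Fin n × Fin n))).filter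
        (fun t => tc t.1 ∧ t.2.1 ≠ t.2.2 ∧ sp t.2.1 t.2.2 ∈ t.1), w t.1
      = 2 * ((n : ℝ) - 1) * treeWeight n x κ := by
    have key : ∀ E : Finset (Fin n × Fin n),
        (∑ q : Fin n × Fin n, if tc E ∧ q.1 ≠ q.2 ∧ sp q.1 q.2 ∈ E then w E else 0)
          = if tc E then (2 * ((n : ℝ) - 1)) * w E else 0 := by
      intro E
      by_cases hc : tc E
      · rw [if_pos hc]
        have : ∀ q : Fin n × Fin n, (if tc E ∧ q.1 ≠ q.2 ∧ sp q.1 q.2 ∈ E then w E else 0)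
            = if q.1 ≠ q.2 ∧ sp q.1 q.2 ∈ E then w E else 0 := by
          intro q
          by_cases h : q.1 ≠ q.2 ∧ sp q.1 q.2 ∈ E
          · rw [if_pos ⟨hc, h⟩, if_pos h]
          · rw [if_neg (fun hh => h hh.2), if_neg h]
        rw [Finset.sum_congr rfl (fun q _ => this q), ← Finset.sum_filter,
          Finset.sum_const, count_dirEdges hc.1, nsmul_eq_mul]
        have hcard := hc.2.2
        have hn1 : (1:ℕ) ≤ n := by omega
        have : ((2 * E.card : ℕ) : ℝ) = 2 * ((n : ℝ) - 1) := by
          have : ((E.card : ℕ) : ℝ) = (n : ℝ) - 1 := by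
            have : ((E.card + 1 : ℕ) : ℝ) = (n : ℝ) := by rw [hcard]
            push_cast at this ⊢
            linarith
          push_cast
          rw [this]
        rw [this]
      · rw [if_neg hc, Finset.sum_eq_zero]
        intro q _
        rw [if_neg (fun hh => hc hh.1)]
    rw [Finset.sum_filter, Fintype.sum_prod_type]
    rw [Finset.sum_congr rfl (fun E _ => key E)]
    rw [← Finset.sum_filter, treeWeight, Finset.mul_sum]
    have hidx : (Finset.univ : Finset (Finset (Fin n × Fin n))).filter tc
        = (upperPairs n).powerset.filter
            (fun E => (graphOf E).Connected ∧ E.card + 1 = n) := by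
      ext E
      simp only [Finset.mem_filter, Finset.mem_univ, true_and, Finset.mem_powerset, htc]
      try tauto
    rw [hidx]
  rw [← hR, Lsum]
  -- step 2: the bijection
  refine Finset.sum_nbij'
    (fun t => (insert (sp t.2.1.1 t.2.1.2) (t.2.2.1 ∪ t.2.2.2), t.2.1))
    (fun t => (Finset.univ.filter
        (fun v => (graphOf (t.1.erase (sp t.2.1 t.2.2))).Reachable t.2.1 v), t.2,
      (t.1.erase (sp t.2.1 t.2.2)).filter (fun q => q.1 ∈ Finset.univ.filter
        (fun v => (graphOf (t.1.erase (sp t.2.1 t.2.2))).Reachable t.2.1 v)),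
      (t.1.erase (sp t.2.1 t.2.2)).filter (fun q => q.1 ∈ (Finset.univ.filter
        (fun v => (graphOf (t.1.erase (sp t.2.1 t.2.2))).Reachable t.2.1 v))ᶜ)))
    ?_ ?_ ?_ ?_ ?_
  · -- forward membership
    rintro ⟨A, ⟨i, j⟩, D₁, D₂⟩ ht
    rw [Finset.mem_filter] at ht
    obtain ⟨-, hi, hj, h1, h2⟩ := ht
    obtain ⟨hsub, hconn, hcard⟩ := glue hi hj h1 h2
    rw [Finset.mem_filter]
    have hne : i ≠ j := fun h => (Finset.mem_compl.1 hj) (h ▸ hi)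
    exact ⟨Finset.mem_univ _, ⟨hsub, hconn, hcard⟩, hne, Finset.mem_insert_self _ _⟩
  · -- backward membership
    rintro ⟨E, i, j⟩ ht
    rw [Finset.mem_filter] at ht
    obtain ⟨-, ⟨hsub, hconn, hcard⟩, hne, hsp⟩ := ht
    have hij : (i, j) ∈ E ∨ (j, i) ∈ E := by
      rcases sp_cases i j with h | h
      · exact Or.inl (h ▸ hsp)
      · exact Or.inr (h ▸ hsp)
    obtain ⟨hiA, hjA, h1, h2⟩ := split hsub hconn hcard hij
    rw [Finset.mem_filter]
    exact ⟨Finset.mem_univ _, hiA, Finset.mem_compl.2 hjA, h1, h2⟩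
  · -- left inverse
    rintro ⟨A, ⟨i, j⟩, D₁, D₂⟩ ht
    rw [Finset.mem_filter] at ht
    obtain ⟨-, hi, hj, h1, h2⟩ := ht
    rw [Finset.mem_compl] at hj
    have hne : i ≠ j := fun h => hj (h ▸ hi)
    have hspni : sp i j ∉ D₁ ∪ D₂ := by
      rw [Finset.mem_union]
      rintro (hq | hq)
      · have hwt := mem_within.1 (h1.1 hq)
        rcases sp_cases i j with h | h
        · rw [h] at hwt; exact hj hwt.2.2
        · rw [h] at hwt; exact hj hwt.2.1
      · have hwt := mem_within.1 (h2.1 hq)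
        rcases sp_cases i j with h | h
        · rw [h] at hwt; exact Finset.mem_compl.1 hwt.2.1 hi
        · rw [h] at hwt; exact Finset.mem_compl.1 hwt.2.2 hi
    have herase : (insert (sp i j) (D₁ ∪ D₂)).erase (sp i j) = D₁ ∪ D₂ :=
      Finset.erase_insert hspni
    -- the reachable set of i in D₁ ∪ D₂ is A
    have hcl : ∀ a b : Fin n, (graphOf (D₁ ∪ D₂)).Adj a b → (a ∈ A ↔ b ∈ A) := by
      intro a b hab
      rw [graphOf_adj] at hab
      rcases hab.2 with hm | hm <;> rw [Finset.mem_union] at hm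
      · rcases hm with hm | hm
        · have hwt := mem_within.1 (h1.1 hm)
          simp [hwt.2.1, hwt.2.2]
        · have hwt := mem_within.1 (h2.1 hm)
          simp [Finset.mem_compl.1 hwt.2.1, Finset.mem_compl.1 hwt.2.2]
      · rcases hm with hm | hm
        · have hwt := mem_within.1 (h1.1 hm)
          simp [hwt.2.1, hwt.2.2]
        · have hwt := mem_within.1 (h2.1 hm)
          simp [Finset.mem_compl.1 hwt.2.1, Finset.mem_compl.1 hwt.2.2]
    have hAeq : Finset.univ.filter
        (fun v => (graphOf (D₁ ∪ D₂)).Reachable i v) = A := by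
      ext v
      simp only [Finset.mem_filter, Finset.mem_univ, true_and]
      constructor
      · intro h
        exact reach_closed hcl hi h
      · intro hv
        exact (h1.2.1 i hi v hv).mono (graphOf_mono Finset.subset_union_left)
    have hD1 : (D₁ ∪ D₂).filter (fun q => q.1 ∈ A) = D₁ := by
      ext q
      simp only [Finset.mem_filter, Finset.mem_union]
      constructor
      · rintro ⟨hm | hm, hq1⟩
        · exact hm
        · exact absurd hq1 (Finset.mem_compl.1 (mem_within.1 (h2.1 hm)).2.1)
      · intro hm
        exact ⟨Or.inl hm, (mem_within.1 (h1.1 hm)).2.1⟩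
    have hD2 : (D₁ ∪ D₂).filter (fun q => q.1 ∈ Aᶜ) = D₂ := by
      ext q
      simp only [Finset.mem_filter, Finset.mem_union, Finset.mem_compl]
      constructor
      · rintro ⟨hm | hm, hq1⟩
        · exact absurd (mem_within.1 (h1.1 hm)).2.1 hq1
        · exact hm
      · intro hm
        exact ⟨Or.inr hm, Finset.mem_compl.1 (mem_within.1 (h2.1 hm)).2.1⟩
    simp only [herase, hAeq, hD1, hD2]
  · -- right inverse
    rintro ⟨E, i, j⟩ ht
    rw [Finset.mem_filter] at ht
    obtain ⟨-, ⟨hsub, hconn, hcard⟩, hne, hsp⟩ := ht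
    simp only
    rw [filter_fst_partition, Finset.insert_erase hsp]
  · -- weights
    rintro ⟨A, ⟨i, j⟩, D₁, D₂⟩ ht
    rw [Finset.mem_filter] at ht
    obtain ⟨-, hi, hj, h1, h2⟩ := ht
    rw [Finset.mem_compl] at hj
    have hne : i ≠ j := fun h => hj (h ▸ hi)
    have hspni : sp i j ∉ D₁ ∪ D₂ := by
      rw [Finset.mem_union]
      rintro (hq | hq)
      · have hwt := mem_within.1 (h1.1 hq)
        rcases sp_cases i j with h | h
        · rw [h] at hwt; exact hj hwt.2.2
        · rw [h] at hwt; exact hj hwt.2.1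
      · have hwt := mem_within.1 (h2.1 hq)
        rcases sp_cases i j with h | h
        · rw [h] at hwt; exact Finset.mem_compl.1 hwt.2.1 hi
        · rw [h] at hwt; exact Finset.mem_compl.1 hwt.2.2 hi
    have hdisj : Disjoint D₁ D₂ := by
      rw [Finset.disjoint_left]
      intro q hq1 hq2
      have := (mem_within.1 (h1.1 hq1)).2.1
      have := Finset.mem_compl.1 (mem_within.1 (h2.1 hq2)).2.1
      contradiction
    simp only [hw]
    rw [Finset.prod_insert hspni, Finset.prod_union hdisj]
    have : κ (x ((sp i j).1)) (x ((sp i j).2)) = κ (x i) (x j) := by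
      rcases sp_cases i j with h | h <;> rw [h]
      exact hκsym _ _
    rw [this]
    ring

end TauRec

namespace TauRec
variable {S : Type*} [Fintype S] {n : ℕ}

lemma univ_filter_mem (A : Finset (Fin n)) : Finset.univ.filter (fun i => i ∈ A) = A := by
  ext i; simp

lemma sum_fiber (x : Fin n → S) (f : S → ℝ) (A : Finset (Fin n)) :
    ∑ i ∈ A, f (x i) = ∑ r : S, (compOf x A r : ℝ) * f r := by
  classical
  rw [← Finset.sum_fiberwise_of_maps_to (fun i _ => Finset.mem_univ (x i)) (fun i => f (x i))]
  apply Finset.sum_congr rfl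
  intro r _
  rw [Finset.sum_congr rfl (fun i hi => by rw [(Finset.mem_filter.1 hi).2]),
    Finset.sum_const, nsmul_eq_mul]
  rfl

lemma Lsum_eq (κ : S → S → ℝ) (x : Fin n → S) :
    Lsum κ x = ∑ A : Finset (Fin n),
      (∑ i ∈ A, ∑ j ∈ Aᶜ, κ (x i) (x j)) * (TOn κ x A * TOn κ x Aᶜ) := by
  classical
  rw [Lsum, Finset.sum_filter, Fintype.sum_prod_type]
  apply Finset.sum_congr rfl
  intro A _
  rw [Fintype.sum_prod_type]
  have hsplit : ∀ (q : Fin n × Fin n) (D₁ D₂ : Finset (Fin n × Fin n)),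
      (if q.1 ∈ A ∧ q.2 ∈ Aᶜ ∧ IsTreeOn A D₁ ∧ IsTreeOn Aᶜ D₂ then
        κ (x q.1) (x q.2) * (∏ p ∈ D₁, κ (x p.1) (x p.2)) * (∏ p ∈ D₂, κ (x p.1) (x p.2))
      else 0)
      = (if q.1 ∈ A ∧ q.2 ∈ Aᶜ then κ (x q.1) (x q.2) else 0) *
        ((if IsTreeOn A D₁ then ∏ p ∈ D₁, κ (x p.1) (x p.2) else 0) *
         (if IsTreeOn Aᶜ D₂ then ∏ p ∈ D₂, κ (x p.1) (x p.2) else 0)) := by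
    intro q D₁ D₂
    by_cases h1 : q.1 ∈ A ∧ q.2 ∈ Aᶜ <;> by_cases h2 : IsTreeOn A D₁ <;>
      by_cases h3 : IsTreeOn Aᶜ D₂ <;>
      simp [h1, h2, h3, mul_assoc] <;> tauto
  calc ∑ q : Fin n × Fin n, ∑ p : Finset (Fin n × Fin n) × Finset (Fin n × Fin n),
        (if q.1 ∈ A ∧ q.2 ∈ Aᶜ ∧ IsTreeOn A p.1 ∧ IsTreeOn Aᶜ p.2 then
          κ (x q.1) (x q.2) * (∏ r ∈ p.1, κ (x r.1) (x r.2)) * (∏ r ∈ p.2, κ (x r.1) (x r.2))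
        else 0)
      = ∑ q : Fin n × Fin n, (if q.1 ∈ A ∧ q.2 ∈ Aᶜ then κ (x q.1) (x q.2) else 0) *
          ∑ p : Finset (Fin n × Fin n) × Finset (Fin n × Fin n),
            ((if IsTreeOn A p.1 then ∏ r ∈ p.1, κ (x r.1) (x r.2) else 0) *
             (if IsTreeOn Aᶜ p.2 then ∏ r ∈ p.2, κ (x r.1) (x r.2) else 0)) := by
        apply Finset.sum_congr rfl
        intro q _
        rw [Finset.mul_sum]
        apply Finset.sum_congr rfl
        intro p _
        exact hsplit q p.1 p.2
    _ = (∑ q : Fin n × Fin n, (if q.1 ∈ A ∧ q.2 ∈ Aᶜ then κ (x q.1) (x q.2) else 0)) *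
          ∑ p : Finset (Fin n × Fin n) × Finset (Fin n × Fin n),
            ((if IsTreeOn A p.1 then ∏ r ∈ p.1, κ (x r.1) (x r.2) else 0) *
             (if IsTreeOn Aᶜ p.2 then ∏ r ∈ p.2, κ (x r.1) (x r.2) else 0)) := by
        rw [Finset.sum_mul]
    _ = (∑ i ∈ A, ∑ j ∈ Aᶜ, κ (x i) (x j)) * (TOn κ x A * TOn κ x Aᶜ) := by
        congr 1
        · rw [Fintype.sum_prod_type]
          have hin : ∀ i : Fin n, (∑ j : Fin n, if i ∈ A ∧ j ∈ Aᶜ then κ (x i) (x j) else 0)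
              = if i ∈ A then ∑ j ∈ Aᶜ, κ (x i) (x j) else 0 := by
            intro i
            by_cases hi : i ∈ A
            · simp only [hi, true_and, if_true]
              exact (Finset.sum_ite_mem Finset.univ Aᶜ _).trans (by rw [Finset.univ_inter])
            · simp [hi]
          rw [Finset.sum_congr rfl (fun i _ => hin i)]
          exact (Finset.sum_ite_mem Finset.univ A _).trans (by rw [Finset.univ_inter])
        · rw [Fintype.sum_prod_type]
          rw [TOn, TOn, Finset.sum_filter, Finset.sum_mul]
          apply Finset.sum_congr rfl
          intro D₁ _
          by_cases h2 : IsTreeOn A D₁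
          · simp only [h2, if_true]
            rw [Finset.mul_sum, Finset.sum_filter]
            simp only [mul_ite, mul_zero]
          · simp [h2]

lemma card_fiber (x : Fin n → S) (m : S → ℕ) :
    ((Finset.univ : Finset (Finset (Fin n))).filter (fun A => compOf x A = m)).card
      = ∏ u : S, (compOf x Finset.univ u).choose (m u) := by
  classical
  rw [show ∏ u : S, (compOf x Finset.univ u).choose (m u)
      = (Fintype.piFinset (fun u : S =>
          (Finset.univ.filter (fun i : Fin n => x i = u)).powersetCard (m u))).card by
    rw [Fintype.card_piFinset]
    apply Finset.prod_congr rfl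
    intro u _
    rw [Finset.card_powersetCard]
    rfl]
  apply Finset.card_nbij' (fun A => fun u => A.filter (fun i => x i = u))
    (fun t => Finset.univ.filter (fun i => i ∈ t (x i)))
  · intro A hA
    rw [Finset.mem_coe, Finset.mem_filter] at hA
    rw [Finset.mem_coe, Fintype.mem_piFinset]
    intro u
    rw [Finset.mem_powersetCard]
    constructor
    · exact Finset.filter_subset_filter _ (Finset.subset_univ A)
    · exact congrFun hA.2 u
  · intro t ht
    rw [Finset.mem_coe, Fintype.mem_piFinset] at ht
    rw [Finset.mem_coe, Finset.mem_filter]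
    refine ⟨Finset.mem_univ _, ?_⟩
    funext u
    have hsubu : ∀ u : S, t u ⊆ Finset.univ.filter (fun i : Fin n => x i = u) := by
      intro u
      exact (Finset.mem_powersetCard.1 (ht u)).1
    have hxu : ∀ (u : S) (i : Fin n), i ∈ t u → x i = u := by
      intro u i hi
      exact (Finset.mem_filter.1 (hsubu u hi)).2
    have : (Finset.univ.filter (fun i => i ∈ t (x i))).filter (fun i => x i = u) = t u := by
      ext i
      simp only [Finset.mem_filter, Finset.mem_univ, true_and]
      constructor
      · rintro ⟨hm, rfl⟩
        exact hm
      · intro hm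
        have := hxu u i hm
        exact ⟨by rw [this]; exact hm, this⟩
    show ((Finset.univ.filter (fun i => i ∈ t (x i))).filter (fun i => x i = u)).card = m u
    rw [this]
    exact (Finset.mem_powersetCard.1 (ht u)).2
  · intro A hA
    ext i
    simp
  · intro t ht
    rw [Finset.mem_coe, Fintype.mem_piFinset] at ht
    have hxu : ∀ (u : S) (i : Fin n), i ∈ t u → x i = u := by
      intro u i hi
      exact (Finset.mem_filter.1 ((Finset.mem_powersetCard.1 (ht u)).1 hi)).2
    funext u
    ext i
    simp only [Finset.mem_filter, Finset.mem_univ, true_and]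
    constructor
    · rintro ⟨hm, rfl⟩
      exact hm
    · intro hm
      have := hxu u i hm
      exact ⟨by rw [this]; exact hm, this⟩

lemma binom_real {a b : ℕ} (h : b ≤ a) :
    (a.factorial : ℝ) / ((b.factorial : ℝ) * ((a - b).factorial : ℝ)) = (a.choose b : ℝ) := by
  rw [← Nat.choose_mul_factorial_mul_factorial h]
  push_cast
  rw [mul_assoc]
  rw [mul_div_assoc]
  rw [div_self, mul_one]
  positivity

end TauRec

namespace TauRec
lemma Lsum_middle {S : Type*} [Fintype S] [DecidableEq S] (κ : S → S → ℝ) (hκsym : ∀ r s, κ r s = κ s r)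
    (k : S → ℕ) :
    Lsum κ (compatVec k) = ∑ m ∈ Finset.Icc 0 k,
      (∏ u : S, ((k u).choose (m u) : ℝ)) *
        ((tau κ m * tau κ (k - m)) *
          (∑ r : S, ∑ s : S, κ r s * (m r : ℝ) * (((k - m) s : ℕ) : ℝ))) := by
  classical
  set n : ℕ := ∑ s : S, k s with hn
  set x : Fin n → S := compatVec k with hx
  have hk : compOf x Finset.univ = k := compOf_univ_compatVec k
  have hle : ∀ m ∈ Finset.Icc 0 k, ∀ u : S, m u ≤ k u := by
    intro m hm u
    rw [Finset.mem_Icc] at hm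
    exact hm.2 u
  rw [Lsum_eq]
  have hmaps : ∀ A ∈ (Finset.univ : Finset (Finset (Fin n))),
      compOf x A ∈ Finset.Icc 0 k := by
    intro A _
    rw [Finset.mem_Icc]
    constructor
    · intro u; exact Nat.zero_le _
    · intro u
      rw [← hk]
      exact compOf_mono x A u
  rw [← Finset.sum_fiberwise_of_maps_to hmaps
    (fun A => (∑ i ∈ A, ∑ j ∈ Aᶜ, κ (x i) (x j)) * (TOn κ x A * TOn κ x Aᶜ))]
  apply Finset.sum_congr rfl
  intro m hm
  have hterm : ∀ A ∈ Finset.univ.filter (fun A => compOf x A = m),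
      (∑ i ∈ A, ∑ j ∈ Aᶜ, κ (x i) (x j)) * (TOn κ x A * TOn κ x Aᶜ)
        = (tau κ m * tau κ (k - m)) *
          (∑ r : S, ∑ s : S, κ r s * (m r : ℝ) * (((k - m) s : ℕ) : ℝ)) := by
    intro A hA
    rw [Finset.mem_filter] at hA
    have hcA : compOf x A = m := hA.2
    have hcAc : compOf x Aᶜ = k - m := by
      funext u
      have h1 := compOf_compl x A u
      rw [hk, hcA] at h1
      have h2 := hle m hm u
      rw [Pi.sub_apply]
      omega
    have hT1 : TOn κ x A = tau κ m := by
      rw [TOn_eq_tau κ hκsym x A, hcA]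
    have hT2 : TOn κ x Aᶜ = tau κ (k - m) := by
      rw [TOn_eq_tau κ hκsym x Aᶜ, hcAc]
    have hκpart : (∑ i ∈ A, ∑ j ∈ Aᶜ, κ (x i) (x j))
        = ∑ r : S, ∑ s : S, κ r s * (m r : ℝ) * (((k - m) s : ℕ) : ℝ) := by
      rw [sum_fiber x (fun r => ∑ j ∈ Aᶜ, κ r (x j)) A]
      apply Finset.sum_congr rfl
      intro r _
      rw [sum_fiber x (fun s => κ r s) Aᶜ, Finset.mul_sum]
      apply Finset.sum_congr rfl
      intro u _
      rw [hcA, hcAc]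
      ring
    rw [hT1, hT2, hκpart]
    ring
  rw [Finset.sum_congr rfl hterm, Finset.sum_const, card_fiber x m, hk,
    nsmul_eq_mul, Nat.cast_prod]
end TauRec


/-- the recursion for the spanning-tree weights `τ`. -/
theorem tau_recursion
    {S : Type*} [Fintype S] [DecidableEq S] [Nonempty S]
    (κ : S → S → ℝ) (hκsym : ∀ r s, κ r s = κ s r) (hκ0 : ∀ r s, 0 ≤ κ r s)
    (k : S → ℕ) :
    (∑ r : S, ∑ s : S, κ r s *
        ∑ m ∈ Finset.Icc 0 k,
          (∏ u : S, (Nat.factorial (k u) : ℝ) /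
              ((Nat.factorial (m u) : ℝ) * (Nat.factorial (k u - m u) : ℝ))) *
            (tau κ m * (m r : ℝ)) * (tau κ (k - m) * ((k - m) s : ℝ)))
      = 2 * (((∑ s : S, k s : ℕ) : ℝ) - 1) * tau κ k := by
  classical
  have hle : ∀ m ∈ Finset.Icc 0 k, ∀ u : S, m u ≤ k u := by
    intro m hm u
    rw [Finset.mem_Icc] at hm
    exact hm.2 u
  have halg : (∑ r : S, ∑ s : S, κ r s *
        ∑ m ∈ Finset.Icc 0 k,
          (∏ u : S, (Nat.factorial (k u) : ℝ) /
              ((Nat.factorial (m u) : ℝ) * (Nat.factorial (k u - m u) : ℝ))) *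
            (tau κ m * (m r : ℝ)) * (tau κ (k - m) * ((k - m) s : ℝ)))
      = TauRec.Lsum κ (compatVec k) := by
    rw [TauRec.Lsum_middle κ hκsym k]
    have h1 : ∀ r : S, ∀ s : S, κ r s *
        (∑ m ∈ Finset.Icc 0 k,
          (∏ u : S, (Nat.factorial (k u) : ℝ) /
              ((Nat.factorial (m u) : ℝ) * (Nat.factorial (k u - m u) : ℝ))) *
            (tau κ m * (m r : ℝ)) * (tau κ (k - m) * ((k - m) s : ℝ)))
        = ∑ m ∈ Finset.Icc 0 k, κ r s *
          ((∏ u : S, ((k u).choose (m u) : ℝ)) *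
            (tau κ m * (m r : ℝ)) * (tau κ (k - m) * ((k - m) s : ℝ))) := by
      intro r s
      rw [Finset.mul_sum]
      apply Finset.sum_congr rfl
      intro m hm
      have hB : (∏ u : S, (Nat.factorial (k u) : ℝ) /
          ((Nat.factorial (m u) : ℝ) * (Nat.factorial (k u - m u) : ℝ)))
          = ∏ u : S, ((k u).choose (m u) : ℝ) := by
        apply Finset.prod_congr rfl
        intro u _
        exact TauRec.binom_real (hle m hm u)
      rw [hB]
    rw [Finset.sum_congr rfl (fun r _ => Finset.sum_congr rfl (fun s _ => h1 r s))]
    rw [Finset.sum_congr rfl (fun r _ => Finset.sum_comm), Finset.sum_comm]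
    refine Finset.sum_congr rfl fun m _ => ?_
    simp only [Finset.mul_sum]
    exact Finset.sum_congr rfl (fun r _ => Finset.sum_congr rfl (fun s _ => by ring))
  rw [halg, TauRec.stepII κ hκsym (compatVec k)]
  rfl



end
end

section
/- Let κ be a kernel on S and c ∈ [0,∞)^S. (i) If κ is irreducible with respect to c and Σ(κ,c) > 1, then the fixed-point system for c has exactly one solution b* with b* ≠ c, and this solution satisfies Σ(κ,b*) = 1. (ii) If Σ(κ,c) ≤ 1, then the only solution of the fixed-point system for c is b = c. (iii) If Σ(κ,c) > 1 (κ possibly reducible with respect to c), then there exists at least one solution b ≠ c; moreover there is a pointwise-smallest solution b_* (i.e. b_* ≤ b for every solution b), it satisfies Σ(κ,b_*) = 1, and every solution b with b ≠ b_* satisfies Σ(κ,b) > 1. -/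
open scoped Classical ENNReal
open Filter MeasureTheory

noncomputable section

set_option linter.unusedSectionVars false
set_option linter.deprecated false

namespace FPSaux

variable {S : Type*} [Fintype S] [DecidableEq S] [Nonempty S]

/-- `kap κ a r = (κ a)_r`. -/
def kap (κ : S → S → ℝ) (a : S → ℝ) (r : S) : ℝ := ∑ s : S, κ r s * a s

/-- The monotone map whose fixed points `a` correspond to solutions `b = c - a`. -/
def phi (κ : S → S → ℝ) (c : S → ℝ) (a : S → ℝ) (r : S) : ℝ :=
  c r * (kap κ a r / (1 + kap κ a r))

lemma kap_nonneg {κ : S → S → ℝ} (hκ0 : ∀ r s, 0 ≤ κ r s) {a : S → ℝ}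
    (ha : ∀ r, 0 ≤ a r) (r : S) : 0 ≤ kap κ a r :=
  Finset.sum_nonneg fun s _ => mul_nonneg (hκ0 r s) (ha s)

lemma kap_mono {κ : S → S → ℝ} (hκ0 : ∀ r s, 0 ≤ κ r s) {a a' : S → ℝ}
    (h : ∀ r, a r ≤ a' r) (r : S) : kap κ a r ≤ kap κ a' r :=
  Finset.sum_le_sum fun s _ => mul_le_mul_of_nonneg_left (h s) (hκ0 r s)

lemma gfun_mono : ∀ {x y : ℝ}, 0 ≤ x → x ≤ y → x / (1 + x) ≤ y / (1 + y) := by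
  intro x y hx hxy
  have h1 : (0:ℝ) < 1 + x := by linarith
  have h2 : (0:ℝ) < 1 + y := by linarith
  rw [div_le_div_iff₀ h1 h2]; nlinarith

lemma gfun_nonneg {x : ℝ} (hx : 0 ≤ x) : 0 ≤ x / (1 + x) :=
  div_nonneg hx (by linarith)

lemma gfun_lt_one {x : ℝ} (hx : 0 ≤ x) : x / (1 + x) < 1 := by
  rw [div_lt_one (by linarith)]; linarith

lemma phi_nonneg {κ : S → S → ℝ} {c : S → ℝ} (hκ0 : ∀ r s, 0 ≤ κ r s)
    (hc : ∀ r, 0 ≤ c r) {a : S → ℝ} (ha : ∀ r, 0 ≤ a r) (r : S) :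
    0 ≤ phi κ c a r :=
  mul_nonneg (hc r) (gfun_nonneg (kap_nonneg hκ0 ha r))

lemma phi_le_c {κ : S → S → ℝ} {c : S → ℝ} (hκ0 : ∀ r s, 0 ≤ κ r s)
    (hc : ∀ r, 0 ≤ c r) {a : S → ℝ} (ha : ∀ r, 0 ≤ a r) (r : S) :
    phi κ c a r ≤ c r := by
  have := gfun_lt_one (kap_nonneg hκ0 ha r)
  calc phi κ c a r ≤ c r * 1 := mul_le_mul_of_nonneg_left this.le (hc r)
  _ = c r := mul_one _

lemma phi_mono {κ : S → S → ℝ} {c : S → ℝ} (hκ0 : ∀ r s, 0 ≤ κ r s)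
    (hc : ∀ r, 0 ≤ c r) {a a' : S → ℝ} (ha : ∀ r, 0 ≤ a r)
    (h : ∀ r, a r ≤ a' r) (r : S) : phi κ c a r ≤ phi κ c a' r :=
  mul_le_mul_of_nonneg_left
    (gfun_mono (kap_nonneg hκ0 ha r) (kap_mono hκ0 h r)) (hc r)

/-- Fixed points of `phi` are exactly solutions `b = c - a`. -/
lemma isFPSol_iff {κ : S → S → ℝ} {c : S → ℝ} (hκ0 : ∀ r s, 0 ≤ κ r s)
    (hc : ∀ r, 0 ≤ c r) (b : S → ℝ) :
    IsFPSol κ c b ↔ ((∀ r, 0 ≤ c r - b r) ∧ (∀ r, b r ≤ c r) ∧ (∀ r, 0 ≤ b r) ∧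
      ∀ r, phi κ c (fun s => c s - b s) r = c r - b r) := by
  constructor
  · rintro ⟨hb0, hbc, heq⟩
    have ha0 : ∀ r, 0 ≤ c r - b r := fun r => by linarith [hbc r]
    refine ⟨ha0, hbc, hb0, fun r => ?_⟩
    have hx := kap_nonneg hκ0 ha0 r
    have hne : (1:ℝ) + kap κ (fun s => c s - b s) r ≠ 0 := by positivity
    rw [phi, ← mul_div_assoc, div_eq_iff hne]
    simp only [kap]
    linear_combination heq r
  · rintro ⟨ha0, hbc, hb0, heq⟩
    refine ⟨hb0, hbc, fun r => ?_⟩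
    have hx := kap_nonneg hκ0 ha0 r
    have hne : (1:ℝ) + kap κ (fun s => c s - b s) r ≠ 0 := by positivity
    have h2 := heq r
    rw [phi, ← mul_div_assoc, div_eq_iff hne] at h2
    simp only [kap] at h2 ⊢
    linear_combination h2

end FPSaux

namespace FPSaux

variable {S : Type*} [Fintype S] [DecidableEq S] [Nonempty S]

/-- Iterates of `phi` starting from `c`. -/
def dseq (κ : S → S → ℝ) (c : S → ℝ) : ℕ → S → ℝ
  | 0 => c
  | n+1 => fun r => phi κ c (dseq κ c n) r

/-- The largest fixed point of `phi`. -/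
def astar (κ : S → S → ℝ) (c : S → ℝ) : S → ℝ := fun r => ⨅ n, dseq κ c n r

variable {κ : S → S → ℝ} {c : S → ℝ}

lemma dseq_nonneg (hκ0 : ∀ r s, 0 ≤ κ r s) (hc : ∀ r, 0 ≤ c r) :
    ∀ n r, 0 ≤ dseq κ c n r := by
  intro n
  induction n with
  | zero => exact hc
  | succ n ih => exact fun r => phi_nonneg hκ0 hc ih r

lemma dseq_le_c (hκ0 : ∀ r s, 0 ≤ κ r s) (hc : ∀ r, 0 ≤ c r) :
    ∀ n r, dseq κ c n r ≤ c r := by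
  intro n
  cases n with
  | zero => exact fun r => le_rfl
  | succ n => exact fun r => phi_le_c hκ0 hc (dseq_nonneg hκ0 hc n) r

lemma dseq_succ_le (hκ0 : ∀ r s, 0 ≤ κ r s) (hc : ∀ r, 0 ≤ c r) :
    ∀ n r, dseq κ c (n+1) r ≤ dseq κ c n r := by
  intro n
  induction n with
  | zero => exact fun r => phi_le_c hκ0 hc hc r
  | succ n ih =>
    exact fun r => phi_mono hκ0 hc (dseq_nonneg hκ0 hc (n+1)) ih r

lemma dseq_antitone (hκ0 : ∀ r s, 0 ≤ κ r s) (hc : ∀ r, 0 ≤ c r) (r : S) :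
    Antitone fun n => dseq κ c n r :=
  antitone_nat_of_succ_le fun n => dseq_succ_le hκ0 hc n r

lemma dseq_bddBelow (hκ0 : ∀ r s, 0 ≤ κ r s) (hc : ∀ r, 0 ≤ c r) (r : S) :
    BddBelow (Set.range fun n => dseq κ c n r) :=
  ⟨0, by rintro x ⟨n, rfl⟩; exact dseq_nonneg hκ0 hc n r⟩

lemma tendsto_dseq (hκ0 : ∀ r s, 0 ≤ κ r s) (hc : ∀ r, 0 ≤ c r) (r : S) :
    Tendsto (fun n => dseq κ c n r) atTop (nhds (astar κ c r)) :=
  tendsto_atTop_ciInf (dseq_antitone hκ0 hc r) (dseq_bddBelow hκ0 hc r)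

lemma astar_nonneg (hκ0 : ∀ r s, 0 ≤ κ r s) (hc : ∀ r, 0 ≤ c r) (r : S) :
    0 ≤ astar κ c r :=
  le_ciInf fun n => dseq_nonneg hκ0 hc n r

lemma astar_le_c (hκ0 : ∀ r s, 0 ≤ κ r s) (hc : ∀ r, 0 ≤ c r) (r : S) :
    astar κ c r ≤ c r :=
  (ciInf_le (dseq_bddBelow hκ0 hc r) 0).trans le_rfl

lemma astar_fixed (hκ0 : ∀ r s, 0 ≤ κ r s) (hc : ∀ r, 0 ≤ c r) (r : S) :
    phi κ c (astar κ c) r = astar κ c r := by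
  have h1 : Tendsto (fun n => dseq κ c (n+1) r) atTop (nhds (astar κ c r)) :=
    (tendsto_dseq hκ0 hc r).comp (tendsto_add_atTop_nat 1)
  have hkap : Tendsto (fun n => kap κ (dseq κ c n) r) atTop
      (nhds (kap κ (astar κ c) r)) := by
    unfold kap
    exact tendsto_finset_sum _ fun s _ =>
      (tendsto_dseq hκ0 hc s).const_mul (κ r s)
  have hne : (1:ℝ) + kap κ (astar κ c) r ≠ 0 := by
    have := kap_nonneg hκ0 (astar_nonneg hκ0 hc) r; positivity
  have h2 : Tendsto (fun n => phi κ c (dseq κ c n) r) atTop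
      (nhds (phi κ c (astar κ c) r)) := by
    unfold phi
    exact tendsto_const_nhds.mul (hkap.div (tendsto_const_nhds.add hkap) hne)
  exact tendsto_nhds_unique h2 h1

/-- Any subinvariant nonnegative point lies below `astar`. -/
lemma le_astar (hκ0 : ∀ r s, 0 ≤ κ r s) (hc : ∀ r, 0 ≤ c r) {a0 : S → ℝ}
    (h0 : ∀ r, 0 ≤ a0 r) (hsub : ∀ r, a0 r ≤ phi κ c a0 r) (r : S) :
    a0 r ≤ astar κ c r := by
  have key : ∀ n r, a0 r ≤ dseq κ c n r := by
    intro n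
    induction n with
    | zero => exact fun r => (hsub r).trans (phi_le_c hκ0 hc h0 r)
    | succ n ih => exact fun r => (hsub r).trans (phi_mono hκ0 hc h0 ih r)
  exact le_ciInf fun n => key n r

end FPSaux

namespace FPSaux

variable {S : Type*} [Fintype S] [DecidableEq S] [Nonempty S]

def sigmaSet (κ : S → S → ℝ) (ν : S → ℝ) : Set ℝ :=
  { t : ℝ | ∃ f : S → ℝ, (∀ s, 0 ≤ f s) ∧ (∑ r : S, ν r * f r ^ 2) ≤ 1 ∧
    t = Real.sqrt (∑ r : S, ν r * (∑ s : S, κ r s * f s * ν s) ^ 2) }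

lemma sigmaOp_eq (κ : S → S → ℝ) (ν : S → ℝ) : sigmaOp κ ν = sSup (sigmaSet κ ν) := rfl

lemma zero_mem_sigmaSet (κ : S → S → ℝ) (ν : S → ℝ) : (0:ℝ) ∈ sigmaSet κ ν := by
  refine ⟨fun _ => 0, fun s => le_rfl, by simp, by simp⟩

variable {κ : S → S → ℝ} {ν : S → ℝ}

lemma bddAbove_sigmaSet (hκ0 : ∀ r s, 0 ≤ κ r s) (hν0 : ∀ r, 0 ≤ ν r) :
    BddAbove (sigmaSet κ ν) := by
  classical
  set K : ℝ := ∑ p : S, ∑ q : S, κ p q with hK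
  set V : ℝ := ∑ s : S, ν s with hV
  have hK0 : 0 ≤ K := Finset.sum_nonneg fun p _ => Finset.sum_nonneg fun q _ => hκ0 p q
  have hV0 : 0 ≤ V := Finset.sum_nonneg fun s _ => hν0 s
  have hκK : ∀ r s, κ r s ≤ K := by
    intro r s
    calc κ r s ≤ ∑ q : S, κ r q :=
          Finset.single_le_sum (fun q _ => hκ0 r q) (Finset.mem_univ s)
    _ ≤ K := Finset.single_le_sum (fun p _ => Finset.sum_nonneg fun q _ => hκ0 p q)
          (Finset.mem_univ r)
  refine ⟨Real.sqrt (V * (K * Real.sqrt V)^2), ?_⟩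
  rintro t ⟨f, hf0, hf1, rfl⟩
  apply Real.sqrt_le_sqrt
  have hfν : ∑ s : S, f s * ν s ≤ Real.sqrt V := by
    have hcs : (∑ s : S, (f s * Real.sqrt (ν s)) * Real.sqrt (ν s))^2 ≤
        (∑ s : S, (f s * Real.sqrt (ν s))^2) * ∑ s : S, Real.sqrt (ν s)^2 :=
      Finset.sum_mul_sq_le_sq_mul_sq _ _ _
    have he1 : ∀ s : S, (f s * Real.sqrt (ν s)) * Real.sqrt (ν s) = f s * ν s := by
      intro s; rw [mul_assoc, Real.mul_self_sqrt (hν0 s)]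
    have he2 : ∀ s : S, (f s * Real.sqrt (ν s))^2 = ν s * f s ^2 := by
      intro s; rw [mul_pow, Real.sq_sqrt (hν0 s)]; ring
    have he3 : ∀ s : S, Real.sqrt (ν s)^2 = ν s := fun s => Real.sq_sqrt (hν0 s)
    simp only [he1, he2, he3] at hcs
    have h2 : (∑ s : S, f s * ν s)^2 ≤ V := by
      calc (∑ s : S, f s * ν s)^2 ≤ (∑ s : S, ν s * f s ^2) * V := hcs
      _ ≤ 1 * V := mul_le_mul_of_nonneg_right hf1 hV0
      _ = V := one_mul V
    have h3 : 0 ≤ ∑ s : S, f s * ν s :=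
      Finset.sum_nonneg fun s _ => mul_nonneg (hf0 s) (hν0 s)
    exact (Real.le_sqrt h3 hV0).mpr h2
  have hg : ∀ r : S, ν r * (∑ s : S, κ r s * f s * ν s)^2 ≤ ν r * (K * Real.sqrt V)^2 := by
    intro r
    have hg0 : 0 ≤ ∑ s : S, κ r s * f s * ν s :=
      Finset.sum_nonneg fun s _ =>
        mul_nonneg (mul_nonneg (hκ0 r s) (hf0 s)) (hν0 s)
    have hgK : (∑ s : S, κ r s * f s * ν s) ≤ K * Real.sqrt V := by
      calc (∑ s : S, κ r s * f s * ν s) ≤ ∑ s : S, K * (f s * ν s) := by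
            refine Finset.sum_le_sum fun s _ => ?_
            rw [mul_assoc]
            exact mul_le_mul_of_nonneg_right (hκK r s)
              (mul_nonneg (hf0 s) (hν0 s))
      _ = K * ∑ s : S, f s * ν s := by rw [Finset.mul_sum]
      _ ≤ K * Real.sqrt V := mul_le_mul_of_nonneg_left hfν hK0
    exact mul_le_mul_of_nonneg_left (pow_le_pow_left₀ hg0 hgK 2) (hν0 r)
  calc (∑ r : S, ν r * (∑ s : S, κ r s * f s * ν s)^2)
      ≤ ∑ r : S, ν r * (K * Real.sqrt V)^2 := Finset.sum_le_sum fun r _ => hg r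
  _ = V * (K * Real.sqrt V)^2 := by rw [← Finset.sum_mul]

lemma le_sigmaOp (hκ0 : ∀ r s, 0 ≤ κ r s) (hν0 : ∀ r, 0 ≤ ν r) {f : S → ℝ}
    (hf0 : ∀ s, 0 ≤ f s) (hf1 : (∑ r : S, ν r * f r ^ 2) ≤ 1) :
    Real.sqrt (∑ r : S, ν r * (∑ s : S, κ r s * f s * ν s) ^ 2) ≤ sigmaOp κ ν :=
  le_csSup (bddAbove_sigmaSet hκ0 hν0) ⟨f, hf0, hf1, rfl⟩

lemma exists_of_one_lt_sigmaOp (hν0 : ∀ r, 0 ≤ ν r) (h : 1 < sigmaOp κ ν) :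
    ∃ f : S → ℝ, (∀ s, 0 ≤ f s) ∧ (∑ r : S, ν r * f r ^ 2) ≤ 1 ∧
      1 < ∑ r : S, ν r * (∑ s : S, κ r s * f s * ν s) ^ 2 := by
  obtain ⟨t, ht, h1t⟩ := exists_lt_of_lt_csSup ⟨0, zero_mem_sigmaSet κ ν⟩ h
  obtain ⟨f, hf0, hf1, rfl⟩ := ht
  refine ⟨f, hf0, hf1, ?_⟩
  have := (Real.lt_sqrt (by norm_num : (0:ℝ) ≤ 1)).mp h1t
  simpa using this

end FPSaux

namespace FPSaux

variable {S : Type*} [Fintype S] [DecidableEq S] [Nonempty S]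

/-- The symmetrized operator `L u r = ∑ s √ν_r κ_{rs} √ν_s u_s`. -/
def Lop (κ : S → S → ℝ) (ν : S → ℝ) (u : S → ℝ) (r : S) : ℝ :=
  ∑ s : S, Real.sqrt (ν r) * κ r s * Real.sqrt (ν s) * u s

variable {κ : S → S → ℝ} {ν : S → ℝ}

lemma Lop_nonneg (hκ0 : ∀ r s, 0 ≤ κ r s) (hν0 : ∀ r, 0 ≤ ν r) {u : S → ℝ}
    (hu : ∀ s, 0 ≤ u s) (r : S) : 0 ≤ Lop κ ν u r :=
  Finset.sum_nonneg fun s _ => mul_nonneg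
    (mul_nonneg (mul_nonneg (Real.sqrt_nonneg _) (hκ0 r s)) (Real.sqrt_nonneg _)) (hu s)

lemma Lop_symm_sum (hκsym : ∀ r s, κ r s = κ s r) (u w : S → ℝ) :
    ∑ r : S, Lop κ ν u r * w r = ∑ r : S, u r * Lop κ ν w r := by
  unfold Lop
  simp only [Finset.sum_mul, Finset.mul_sum]
  rw [Finset.sum_comm]
  refine Finset.sum_congr rfl fun x _ => Finset.sum_congr rfl fun y _ => ?_
  rw [hκsym y x]; ring

lemma Lop_add_smul (y x : S → ℝ) (t : ℝ) (r : S) :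
    Lop κ ν (fun s => y s + t * x s) r = Lop κ ν y r + t * Lop κ ν x r := by
  unfold Lop
  rw [Finset.mul_sum, ← Finset.sum_add_distrib]
  exact Finset.sum_congr rfl fun s _ => by ring

lemma Lop_smul (x : S → ℝ) (t : ℝ) (r : S) :
    Lop κ ν (fun s => t * x s) r = t * Lop κ ν x r := by
  unfold Lop
  rw [Finset.mul_sum]
  exact Finset.sum_congr rfl fun s _ => by ring

lemma Lop_zero_of_nu_zero {r : S} (h : ν r = 0) (u : S → ℝ) : Lop κ ν u r = by
    exact 0 := by
  unfold Lop
  refine Finset.sum_eq_zero fun s _ => ?_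
  rw [h, Real.sqrt_zero]; ring

/-- Existence of a nonnegative eigenvector with eigenvalue `> 1`. -/
lemma eigen_exists (hκsym : ∀ r s, κ r s = κ s r) (hκ0 : ∀ r s, 0 ≤ κ r s)
    (hν0 : ∀ r, 0 ≤ ν r) {u0 : S → ℝ} (hu0n : ∑ r : S, u0 r ^ 2 ≤ 1)
    (hu0q : 1 < ∑ r : S, (Lop κ ν u0 r) ^ 2) :
    ∃ σ : ℝ, ∃ v : S → ℝ, 1 < σ ∧ (∀ r, 0 ≤ v r) ∧ (∃ r, 0 < v r) ∧
      (∀ r, ν r = 0 → v r = 0) ∧ ∀ r, Lop κ ν v r = σ * v r := by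
  classical
  set B : Set (S → ℝ) := {u | ∑ r : S, u r ^ 2 ≤ 1} with hB
  set q : (S → ℝ) → ℝ := fun u => ∑ r : S, (Lop κ ν u r) ^ 2 with hq
  -- compactness of B
  have hcont_norm : Continuous fun u : S → ℝ => ∑ r : S, u r ^ 2 :=
    continuous_finset_sum _ fun r _ => (continuous_apply r).pow 2
  have hBclosed : IsClosed B := by
    have : B = (fun u : S → ℝ => ∑ r : S, u r ^ 2) ⁻¹' Set.Iic 1 := rfl
    rw [this]; exact isClosed_Iic.preimage hcont_norm
  have hBsub : B ⊆ Metric.closedBall 0 1 := by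
    intro u hu
    rw [Metric.mem_closedBall, dist_zero_right]
    rw [pi_norm_le_iff_of_nonneg (by norm_num : (0:ℝ) ≤ 1)]
    intro i
    have h1 : u i ^ 2 ≤ 1 := le_trans
      (Finset.single_le_sum (fun r _ => sq_nonneg (u r)) (Finset.mem_univ i)) hu
    have := sq_abs (u i)
    rw [Real.norm_eq_abs]
    nlinarith [abs_nonneg (u i)]
  have hBcompact : IsCompact B :=
    Metric.isCompact_of_isClosed_isBounded hBclosed
      (Metric.isBounded_closedBall.subset hBsub)
  have hqcont : Continuous q := by
    refine continuous_finset_sum _ fun r _ => Continuous.pow ?_ 2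
    exact continuous_finset_sum _ fun s _ => continuous_const.mul (continuous_apply s)
  obtain ⟨w, hwB, hwmax⟩ := hBcompact.exists_isMaxOn ⟨0, by simp [hB]⟩
    hqcont.continuousOn
  -- replace by absolute values
  set u1 : S → ℝ := fun r => |w r| with hu1
  have hu1B : u1 ∈ B := by
    simp only [hB, Set.mem_setOf_eq, hu1, sq_abs]
    exact hwB
  have hu10 : ∀ r, 0 ≤ u1 r := fun r => abs_nonneg _
  have hqu1 : q w ≤ q u1 := by
    refine Finset.sum_le_sum fun r _ => ?_
    have habs : |Lop κ ν w r| ≤ Lop κ ν u1 r := by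
      refine (Finset.abs_sum_le_sum_abs _ _).trans ?_
      refine Finset.sum_le_sum fun s _ => ?_
      rw [abs_mul]
      refine mul_le_mul_of_nonneg_right le_rfl (abs_nonneg _) |>.trans ?_
      have hM : (0:ℝ) ≤ Real.sqrt (ν r) * κ r s * Real.sqrt (ν s) :=
        mul_nonneg (mul_nonneg (Real.sqrt_nonneg _) (hκ0 r s)) (Real.sqrt_nonneg _)
      rw [abs_of_nonneg hM]
    calc (Lop κ ν w r)^2 = |Lop κ ν w r|^2 := (sq_abs _).symm
    _ ≤ (Lop κ ν u1 r)^2 := by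
        have h0 : 0 ≤ |Lop κ ν w r| := abs_nonneg _
        nlinarith
  have hmax1 : ∀ x ∈ B, q x ≤ q u1 := fun x hx => (hwmax hx).trans hqu1
  set lam : ℝ := q u1 with hlam
  have hlam1 : 1 < lam := lt_of_lt_of_le hu0q ((hmax1 u0 hu0n).trans le_rfl)
  have hlam0 : 0 < lam := lt_trans one_pos hlam1
  -- norm of u1 is 1
  have hnorm1 : ∑ r : S, u1 r ^ 2 = 1 := by
    by_contra hne
    have hlt : ∑ r : S, u1 r ^ 2 < 1 := lt_of_le_of_ne hu1B hne
    have hn0 : 0 < ∑ r : S, u1 r ^ 2 := by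
      rcases (Finset.sum_nonneg fun r (_ : r ∈ Finset.univ) => sq_nonneg (u1 r)).lt_or_eq with h | h
      · exact h
      · exfalso
        have hz : ∀ r, u1 r = 0 := by
          intro r
          have := (Finset.sum_eq_zero_iff_of_nonneg
            (fun r (_ : r ∈ Finset.univ) => sq_nonneg (u1 r))).mp h.symm r (Finset.mem_univ r)
          exact pow_eq_zero_iff (n := 2) (by norm_num) |>.mp this
        have : q u1 = 0 := by
          refine Finset.sum_eq_zero fun r _ => ?_
          have : Lop κ ν u1 r = 0 := by
            refine Finset.sum_eq_zero fun s _ => ?_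
            rw [hz s, mul_zero]
          rw [this]; exact zero_pow (by norm_num)
        rw [hlam, this] at hlam0; exact lt_irrefl 0 hlam0
    set n : ℝ := ∑ r : S, u1 r ^ 2 with hn
    set u2 : S → ℝ := fun r => u1 r / Real.sqrt n with hu2
    have hsq : Real.sqrt n ^ 2 = n := Real.sq_sqrt hn0.le
    have hsqpos : 0 < Real.sqrt n := Real.sqrt_pos.mpr hn0
    have hu2B : u2 ∈ B := by
      simp only [hB, Set.mem_setOf_eq, hu2, div_pow]
      rw [← Finset.sum_div, hsq, ← hn]
      exact le_of_eq (div_self (ne_of_gt hn0))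
    have hLu2 : ∀ r, Lop κ ν u2 r = Lop κ ν u1 r / Real.sqrt n := by
      intro r
      have : u2 = fun s => (1 / Real.sqrt n) * u1 s := by
        funext s; simp [hu2, div_eq_mul_inv, mul_comm]
      rw [this, Lop_smul]; ring
    have hqu2 : q u2 = lam / n := by
      simp only [hq, hLu2, div_pow]
      rw [← Finset.sum_div, hsq, hlam, hq]
    have : q u2 ≤ lam := hmax1 u2 hu2B
    rw [hqu2] at this
    have : lam < lam := by
      calc lam = lam / 1 := (div_one lam).symm
      _ < lam / n := by
          apply div_lt_div_of_pos_left hlam0 hn0 hlt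
      _ ≤ lam := this
    exact lt_irrefl _ this
  -- Rayleigh bound
  have hray : ∀ x : S → ℝ, q x ≤ lam * ∑ r : S, x r ^ 2 := by
    intro x
    rcases eq_or_lt_of_le (Finset.sum_nonneg fun r (_ : r ∈ Finset.univ) =>
      sq_nonneg (x r)) with h | h
    · have hz : ∀ r, x r = 0 := by
        intro r
        have := (Finset.sum_eq_zero_iff_of_nonneg
          (fun r (_ : r ∈ Finset.univ) => sq_nonneg (x r))).mp h.symm r (Finset.mem_univ r)
        exact pow_eq_zero_iff (n := 2) (by norm_num) |>.mp this
      have hq0 : q x = 0 := by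
        refine Finset.sum_eq_zero fun r _ => ?_
        have : Lop κ ν x r = 0 :=
          Finset.sum_eq_zero fun s _ => by rw [hz s, mul_zero]
        rw [this]; exact zero_pow (by norm_num)
      rw [hq0, ← h, mul_zero]
    · set n : ℝ := ∑ r : S, x r ^ 2 with hn
      have hsq : Real.sqrt n ^ 2 = n := Real.sq_sqrt h.le
      have hsqpos : 0 < Real.sqrt n := Real.sqrt_pos.mpr h
      set x2 : S → ℝ := fun r => x r / Real.sqrt n with hx2
      have hx2B : x2 ∈ B := by
        simp only [hB, Set.mem_setOf_eq, hx2, div_pow]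
        rw [← Finset.sum_div, hsq, ← hn]
        exact le_of_eq (div_self (ne_of_gt h))
      have hLx2 : ∀ r, Lop κ ν x2 r = Lop κ ν x r / Real.sqrt n := by
        intro r
        have : x2 = fun s => (1 / Real.sqrt n) * x s := by
          funext s; simp [hx2, div_eq_mul_inv, mul_comm]
        rw [this, Lop_smul]; ring
      have hqx2 : q x2 = q x / n := by
        simp only [hq, hLx2, div_pow]
        rw [← Finset.sum_div, hsq]
      have := hmax1 x2 hx2B
      rw [hqx2, div_le_iff₀ h] at this
      linarith [this]
  -- the quadratic-form trick: u1 is an eigenvector of Lop ∘ Lop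
  have hLL : ∀ r, Lop κ ν (Lop κ ν u1) r = lam * u1 r := by
    intro r
    set x : S → ℝ := fun s => if s = r then (1:ℝ) else 0 with hx
    set A : ℝ := lam * ∑ s : S, x s ^ 2 - q x with hA
    set Bb : ℝ := lam * ∑ s : S, x s * u1 s - ∑ s : S, Lop κ ν x s * Lop κ ν u1 s
      with hBb
    have hA0 : 0 ≤ A := by rw [hA]; linarith [hray x]
    have hkey : ∀ t : ℝ, 0 ≤ 2 * t * Bb + t ^ 2 * A := by
      intro t
      have hexp : ∀ s, Lop κ ν (fun s' => u1 s' + t * x s') s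
          = Lop κ ν u1 s + t * Lop κ ν x s := Lop_add_smul u1 x t
      have h1 : q (fun s => u1 s + t * x s)
          ≤ lam * ∑ s : S, (u1 s + t * x s) ^ 2 := hray _
      have h2 : q (fun s => u1 s + t * x s) =
          q u1 + 2 * t * ∑ s : S, Lop κ ν u1 s * Lop κ ν x s
            + t ^ 2 * q x := by
        simp only [hq, hexp]
        calc ∑ s : S, (Lop κ ν u1 s + t * Lop κ ν x s) ^ 2
            = ∑ s : S, ((Lop κ ν u1 s)^2 + ((2*t) * (Lop κ ν u1 s * Lop κ ν x s)
              + t^2 * (Lop κ ν x s)^2)) :=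
              Finset.sum_congr rfl fun s _ => by ring
        _ = _ := by
              rw [Finset.sum_add_distrib, Finset.sum_add_distrib,
                ← Finset.mul_sum, ← Finset.mul_sum]
              ring
      have h3 : (∑ s : S, (u1 s + t * x s) ^ 2) =
          (∑ s : S, u1 s ^ 2) + 2 * t * ∑ s : S, x s * u1 s
            + t ^ 2 * ∑ s : S, x s ^ 2 := by
        calc ∑ s : S, (u1 s + t * x s) ^ 2
            = ∑ s : S, ((u1 s)^2 + ((2*t) * (x s * u1 s) + t^2 * (x s)^2)) :=
              Finset.sum_congr rfl fun s _ => by ring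
        _ = _ := by
              rw [Finset.sum_add_distrib, Finset.sum_add_distrib,
                ← Finset.mul_sum, ← Finset.mul_sum]
              ring
      rw [h2, h3, hnorm1] at h1
      have hlamq : q u1 = lam := rfl
      rw [hlamq] at h1
      have hcomm : ∑ s : S, Lop κ ν x s * Lop κ ν u1 s
          = ∑ s : S, Lop κ ν u1 s * Lop κ ν x s :=
        Finset.sum_congr rfl fun s _ => by ring
      simp only [hA, hBb, hcomm]
      nlinarith [h1]
    have hBb0 : Bb = 0 := by
      have h := hkey (-Bb / (A + 1))
      have hA1 : (0:ℝ) < A + 1 := by linarith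
      have hne1 : (A + 1) ≠ 0 := ne_of_gt hA1
      have h2 := mul_le_mul_of_nonneg_right h (mul_pos hA1 hA1).le
      rw [zero_mul] at h2
      have h3 : (2 * (-Bb / (A + 1)) * Bb + (-Bb / (A + 1)) ^ 2 * A) * ((A+1)*(A+1))
          = -(Bb^2) * (A + 2) := by
        field_simp
        ring
      rw [h3] at h2
      have h4 : Bb ^ 2 ≤ 0 := by nlinarith [sq_nonneg Bb]
      have h5 : Bb ^ 2 = 0 := le_antisymm h4 (sq_nonneg Bb)
      exact pow_eq_zero_iff (n := 2) (by norm_num) |>.mp h5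
    -- unpack Bb with the basis vector x = e_r
    have hxu : ∑ s : S, x s * u1 s = u1 r := by
      simp [hx]
    have hLx : ∑ s : S, Lop κ ν x s * Lop κ ν u1 s = Lop κ ν (Lop κ ν u1) r := by
      rw [Lop_symm_sum hκsym]
      simp [hx]
    rw [hBb, hxu, hLx] at hBb0
    linarith [hBb0]
  -- construct the eigenvector
  set sig : ℝ := Real.sqrt lam with hsig
  have hsig1 : 1 < sig := by
    rw [hsig]
    have := (Real.lt_sqrt (by norm_num : (0:ℝ) ≤ 1)).mpr (by linarith : (1:ℝ)^2 < lam)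
    simpa using this
  have hsigsq : sig ^ 2 = lam := Real.sq_sqrt hlam0.le
  set v : S → ℝ := fun r => Lop κ ν u1 r + sig * u1 r with hv
  have hv0 : ∀ r, 0 ≤ v r := fun r => add_nonneg (Lop_nonneg hκ0 hν0 hu10 r)
    (mul_nonneg (by linarith) (hu10 r))
  have hveig : ∀ r, Lop κ ν v r = sig * v r := by
    intro r
    have : Lop κ ν v r = Lop κ ν (Lop κ ν u1) r + sig * Lop κ ν u1 r := by
      rw [hv]
      exact Lop_add_smul (Lop κ ν u1) u1 sig r
    rw [this, hLL r]
    simp only [hv]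
    rw [← hsigsq]
    ring
  have hvne : ∃ r, 0 < v r := by
    by_contra hcon
    push_neg at hcon
    have hz : ∀ r, v r = 0 := fun r => le_antisymm (hcon r) (hv0 r)
    have hu1z : ∀ r, u1 r = 0 := by
      intro r
      have h1 := hz r
      have h2 : 0 ≤ Lop κ ν u1 r := Lop_nonneg hκ0 hν0 hu10 r
      have h3 : 0 ≤ sig * u1 r := mul_nonneg (by linarith) (hu10 r)
      have : sig * u1 r = 0 := by simp only [hv] at h1; linarith
      rcases mul_eq_zero.mp this with h | h
      · linarith
      · exact h
    have : (1:ℝ) = 0 := by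
      rw [← hnorm1]
      exact Finset.sum_eq_zero fun r _ => by rw [hu1z r]; ring
    norm_num at this
  have hsupp : ∀ r, ν r = 0 → v r = 0 := by
    intro r hr
    have h1 : Lop κ ν u1 r = 0 := Lop_zero_of_nu_zero hr u1
    have h2 : Lop κ ν (Lop κ ν u1) r = 0 := Lop_zero_of_nu_zero hr _
    have h3 : u1 r = 0 := by
      have := hLL r
      rw [h2] at this
      have := this.symm
      rcases mul_eq_zero.mp this with h | h
      · exact absurd h (ne_of_gt hlam0)
      · exact h
    simp only [hv, h1, h3, mul_zero, add_zero]
  exact ⟨sig, v, hsig1, hv0, hvne, hsupp, hveig⟩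

end FPSaux

namespace FPSaux

variable {S : Type*} [Fintype S] [DecidableEq S] [Nonempty S]
variable {κ : S → S → ℝ} {ν : S → ℝ} {c : S → ℝ}

lemma kap_add (x y : S → ℝ) (r : S) :
    kap κ (fun s => x s + y s) r = kap κ x r + kap κ y r := by
  unfold kap
  rw [← Finset.sum_add_distrib]
  exact Finset.sum_congr rfl fun s _ => by ring

lemma kap_symm_sum (hκsym : ∀ r s, κ r s = κ s r) (u w : S → ℝ) :
    ∑ r : S, u r * kap κ w r = ∑ r : S, w r * kap κ u r := by
  unfold kap
  simp only [Finset.mul_sum]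
  rw [Finset.sum_comm]
  refine Finset.sum_congr rfl fun x _ => Finset.sum_congr rfl fun y _ => ?_
  rw [hκsym y x]; ring

lemma phi_lt_c (hκ0 : ∀ r s, 0 ≤ κ r s) {a : S → ℝ} (ha : ∀ r, 0 ≤ a r)
    {r : S} (hcr : 0 < c r) : phi κ c a r < c r := by
  have := gfun_lt_one (kap_nonneg hκ0 ha r)
  calc phi κ c a r < c r * 1 := by
        exact mul_lt_mul_of_pos_left this hcr
  _ = c r := mul_one _

/-- The cleared form of the fixed-point equation. -/
lemma fixed_cleared (hκ0 : ∀ r s, 0 ≤ κ r s) {a : S → ℝ} (ha : ∀ r, 0 ≤ a r)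
    {r : S} (hfix : phi κ c a r = a r) :
    kap κ a r * (c r - a r) = a r := by
  have hx := kap_nonneg hκ0 ha r
  have hne : (1:ℝ) + kap κ a r ≠ 0 := by positivity
  rw [phi, ← mul_div_assoc, div_eq_iff hne] at hfix
  linear_combination hfix

/-- From `1 < sigmaOp κ ν` obtain a nonnegative eigenvector of `Lop` with
eigenvalue `> 1`. -/
lemma eigen_of_one_lt_sigmaOp (hκsym : ∀ r s, κ r s = κ s r)
    (hκ0 : ∀ r s, 0 ≤ κ r s) (hν0 : ∀ r, 0 ≤ ν r) (h : 1 < sigmaOp κ ν) :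
    ∃ σ : ℝ, ∃ v : S → ℝ, 1 < σ ∧ (∀ r, 0 ≤ v r) ∧ (∃ r, 0 < v r) ∧
      (∀ r, ν r = 0 → v r = 0) ∧ ∀ r, Lop κ ν v r = σ * v r := by
  obtain ⟨f, hf0, hf1, hfq⟩ := exists_of_one_lt_sigmaOp hν0 h
  set u0 : S → ℝ := fun s => f s * Real.sqrt (ν s) with hu0
  have hn : ∑ r : S, u0 r ^ 2 ≤ 1 := by
    refine le_trans (le_of_eq (Finset.sum_congr rfl fun r _ => ?_)) hf1
    simp only [hu0]
    rw [mul_pow, Real.sq_sqrt (hν0 r)]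
    ring
  have hLu0 : ∀ r, Lop κ ν u0 r
      = Real.sqrt (ν r) * ∑ s : S, κ r s * f s * ν s := by
    intro r
    unfold Lop
    rw [Finset.mul_sum]
    refine Finset.sum_congr rfl fun s _ => ?_
    simp only [hu0]
    have : Real.sqrt (ν s) * Real.sqrt (ν s) = ν s := Real.mul_self_sqrt (hν0 s)
    linear_combination (Real.sqrt (ν r) * κ r s * f s) * this
  have hq : 1 < ∑ r : S, (Lop κ ν u0 r) ^ 2 := by
    refine lt_of_lt_of_le hfq (le_of_eq (Finset.sum_congr rfl fun r _ => ?_).symm)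
    rw [hLu0 r, mul_pow, Real.sq_sqrt (hν0 r)]
  exact eigen_exists hκsym hκ0 hν0 hn hq

/-- Perturbation of a fixed point along an eigenvector with eigenvalue `> 1`
supported where `kap κ a` vanishes yields a strictly larger subinvariant point. -/
lemma pert_lemma (hκsym : ∀ r s, κ r s = κ s r) (hκ0 : ∀ r s, 0 ≤ κ r s)
    (hc : ∀ r, 0 ≤ c r) {a : S → ℝ} (ha0 : ∀ r, 0 ≤ a r)
    (hafix : ∀ r, phi κ c a r = a r)
    {σ : ℝ} {v : S → ℝ} (hσ : 1 < σ) (hv0 : ∀ r, 0 ≤ v r) (hvne : ∃ r, 0 < v r)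
    (hsupp : ∀ r, c r - a r = 0 → v r = 0)
    (heig : ∀ r, Lop κ (fun s => c s - a s) v r = σ * v r)
    (hka : ∀ r, 0 < v r → kap κ a r = 0) :
    ∃ a0 : S → ℝ, (∀ r, 0 ≤ a0 r) ∧ (∀ r, a0 r ≤ phi κ c a0 r) ∧
      (∀ r, a r ≤ a0 r) ∧ ∃ r, a r < a0 r := by
  classical
  set b : S → ℝ := fun r => c r - a r with hbdef
  have hb0 : ∀ r, 0 ≤ b r := by
    intro r
    have := phi_le_c hκ0 hc ha0 r
    rw [hafix r] at this
    simp only [hbdef]; linarith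
  have hbpos : ∀ r, 0 < v r → 0 < b r := by
    intro r hv
    rcases (hb0 r).lt_or_eq with h | h
    · exact h
    · exact absurd (hsupp r h.symm) (ne_of_gt hv)
  set R : Finset S := Finset.univ.filter fun r => 0 < v r with hR
  have hRne : R.Nonempty := by
    obtain ⟨r, hr⟩ := hvne
    exact ⟨r, by simp [hR, hr]⟩
  set m : ℝ := R.inf' hRne fun r => Real.sqrt (b r) / v r with hm
  have hm0 : 0 < m := by
    rw [hm, Finset.lt_inf'_iff]
    intro r hr
    have hvr : 0 < v r := by simpa [hR] using hr
    exact div_pos (Real.sqrt_pos.mpr (hbpos r hvr)) hvr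
  have hσ0 : (0:ℝ) < σ := lt_trans one_pos hσ
  set t : ℝ := (σ - 1) / σ * m with ht
  have ht0 : 0 < t := mul_pos (div_pos (by linarith) hσ0) hm0
  set a0 : S → ℝ := fun r => a r + t * v r * Real.sqrt (b r) with ha0def
  have ha0le : ∀ r, a r ≤ a0 r := by
    intro r
    simp only [ha0def]
    have : 0 ≤ t * v r * Real.sqrt (b r) :=
      mul_nonneg (mul_nonneg ht0.le (hv0 r)) (Real.sqrt_nonneg _)
    linarith
  have ha00 : ∀ r, 0 ≤ a0 r := fun r => le_trans (ha0 r) (ha0le r)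
  refine ⟨a0, ha00, ?_, ha0le, ?_⟩
  · intro r
    rcases (hv0 r).lt_or_eq with hvr | hvr
    · -- v r > 0
      have hbr : 0 < b r := hbpos r hvr
      have hsbr : 0 < Real.sqrt (b r) := Real.sqrt_pos.mpr hbr
      have hκa : kap κ a r = 0 := hka r hvr
      -- a r = 0 and c r = b r
      have har0 : a r = 0 := by
        have := hafix r
        rw [phi, hκa] at this
        simpa using this.symm
      have hcb : c r = b r := by simp only [hbdef]; linarith
      -- the kernel applied to the perturbation
      set y : ℝ := kap κ (fun s => t * v s * Real.sqrt (b s)) r with hy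
      have hy0 : 0 ≤ y := kap_nonneg hκ0 (fun s => mul_nonneg
        (mul_nonneg ht0.le (hv0 s)) (Real.sqrt_nonneg _)) r
      have hkapa0 : kap κ a0 r = y := by
        have := kap_add (κ := κ) a (fun s => t * v s * Real.sqrt (b s)) r
        simp only [ha0def]
        rw [this, hκa, zero_add, hy]
      have hsy : Real.sqrt (b r) * y = t * σ * v r := by
        have hL := heig r
        unfold Lop at hL
        simp only [hy]
        unfold kap
        rw [Finset.mul_sum]
        have : ∑ s : S, Real.sqrt (b r) * (κ r s * (t * v s * Real.sqrt (b s)))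
            = t * ∑ s : S, Real.sqrt (b r) * κ r s * Real.sqrt (b s) * v s := by
          rw [Finset.mul_sum]
          exact Finset.sum_congr rfl fun s _ => by ring
        rw [this]
        simp only [hbdef] at hL ⊢
        rw [hL]
        ring
      have h1y : 1 + y ≤ σ := by
        have hinf : m ≤ Real.sqrt (b r) / v r := by
          rw [hm]
          exact Finset.inf'_le _ (by simp [hR, hvr])
        have h1 : t ≤ (σ - 1) / σ * (Real.sqrt (b r) / v r) := by
          rw [ht]
          exact mul_le_mul_of_nonneg_left hinf (div_nonneg (by linarith) hσ0.le)
        have h2 : t * (σ * v r) ≤ (σ - 1) * Real.sqrt (b r) := by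
          have := mul_le_mul_of_nonneg_right h1 (mul_pos hσ0 hvr).le
          have heq : (σ - 1) / σ * (Real.sqrt (b r) / v r) * (σ * v r)
              = (σ - 1) * Real.sqrt (b r) := by
            field_simp
          linarith [this, heq.le, heq.ge]
        have h3 : Real.sqrt (b r) * y ≤ (σ - 1) * Real.sqrt (b r) := by
          rw [hsy]; linarith [h2]
        have h4 : Real.sqrt (b r) * y ≤ Real.sqrt (b r) * (σ - 1) := by
          linarith [h3]
        have := (mul_le_mul_iff_right₀ hsbr).mp h4
        linarith
      have h1ypos : (0:ℝ) < 1 + y := by linarith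
      rw [phi, hkapa0]
      simp only [ha0def, har0, zero_add]
      rw [hcb, ← mul_div_assoc, le_div_iff₀ h1ypos]
      calc t * v r * Real.sqrt (b r) * (1 + y)
          ≤ t * v r * Real.sqrt (b r) * σ := by
            refine mul_le_mul_of_nonneg_left h1y ?_
            positivity
      _ = Real.sqrt (b r) * (t * σ * v r) := by ring
      _ = Real.sqrt (b r) * (Real.sqrt (b r) * y) := by rw [hsy]
      _ = b r * y := by rw [← mul_assoc, Real.mul_self_sqrt hbr.le]
    · -- v r = 0
      have : a0 r = a r := by simp only [ha0def, ← hvr]; ring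
      rw [this, ← hafix r]
      exact phi_mono hκ0 hc ha0 ha0le r
  · obtain ⟨r, hr⟩ := hvne
    refine ⟨r, ?_⟩
    simp only [ha0def]
    have hbr : 0 < b r := hbpos r hr
    have : 0 < t * v r * Real.sqrt (b r) :=
      mul_pos (mul_pos ht0 hr) (Real.sqrt_pos.mpr hbr)
    linarith

end FPSaux

namespace FPSaux

variable {S : Type*} [Fintype S] [DecidableEq S] [Nonempty S]
variable {κ : S → S → ℝ} {c : S → ℝ}

/-- Identity relating two solutions of the fixed-point system. -/
lemma sol_pair_identity {b b' : S → ℝ} (hb : IsFPSol κ c b) (hb' : IsFPSol κ c b')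
    (r : S) :
    c r * (b r - b' r) = b r * b' r * kap κ (fun s => b s - b' s) r := by
  obtain ⟨_, _, heq⟩ := hb
  obtain ⟨_, _, heq'⟩ := hb'
  have h := heq r
  have h' := heq' r
  have hk : kap κ (fun s => b s - b' s) r
      = kap κ (fun s => c s - b' s) r - kap κ (fun s => c s - b s) r := by
    unfold kap
    rw [← Finset.sum_sub_distrib]
    exact Finset.sum_congr rfl fun s _ => by ring
  rw [hk]
  unfold kap
  linear_combination b' r * h - b r * h'

/-- If two distinct comparable solutions exist, the operator at the larger one is
strictly supercritical. -/
lemma sigma_gt_one_of_two_sols (hκsym : ∀ r s, κ r s = κ s r)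
    (hκ0 : ∀ r s, 0 ≤ κ r s) (hc : ∀ r, 0 ≤ c r) {b b' : S → ℝ}
    (hb : IsFPSol κ c b) (hb' : IsFPSol κ c b') (hle : ∀ r, b' r ≤ b r)
    (hne : ∃ r, b' r < b r) : 1 < sigmaOp κ b := by
  classical
  obtain ⟨hb0, hbc, heqb⟩ := hb
  obtain ⟨hb'0, hb'c, heqb'⟩ := hb'
  set d : S → ℝ := fun r => b r - b' r with hd
  have hd0 : ∀ r, 0 ≤ d r := fun r => by simp only [hd]; linarith [hle r]
  set f : S → ℝ := fun r => if b r = 0 then 0 else d r / b r with hf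
  have hf0 : ∀ r, 0 ≤ f r := by
    intro r
    simp only [hf]
    split
    · exact le_rfl
    · rename_i hbr
      exact div_nonneg (hd0 r) (hb0 r)
  have hfb : ∀ r, f r * b r = d r := by
    intro r
    simp only [hf]
    split
    · rename_i hbr
      have : d r = 0 := by
        have := hle r; have := hb'0 r
        simp only [hd]; rw [hbr] at *; linarith
      rw [this, zero_mul]
    · rename_i hbr
      rw [div_mul_cancel₀ _ hbr]
  have hTf : ∀ r, (∑ s : S, κ r s * f s * b s) = kap κ d r := by
    intro r
    unfold kap
    refine Finset.sum_congr rfl fun s _ => ?_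
    rw [mul_assoc, hfb s]
  -- pointwise comparison
  have hkey : ∀ r, b r * f r ^ 2 ≤ b r * (kap κ d r) ^ 2 := by
    intro r
    rcases (hd0 r).lt_or_eq with hdr | hdr
    · -- 0 < d r
      have hbr : 0 < b r := lt_of_lt_of_le hdr (by simp only [hd]; linarith [hb'0 r])
      have hcr : 0 < c r := lt_of_lt_of_le hbr (hbc r)
      have hid := sol_pair_identity ⟨hb0, hbc, heqb⟩ ⟨hb'0, hb'c, heqb'⟩ r
      have hb'r : 0 < b' r := by
        rcases (hb'0 r).lt_or_eq with h | h
        · exact h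
        · exfalso
          rw [← h] at hid
          simp only [mul_zero, zero_mul, sub_zero] at hid
          nlinarith [mul_pos hcr hbr]
      have hkd : kap κ d r = c r * d r / (b r * b' r) := by
        rw [eq_div_iff (by positivity)]
        simp only [hd]
        linear_combination -hid
      have hfr : f r = d r / b r := by
        simp only [hf]; rw [if_neg (ne_of_gt hbr)]
      have hlt : f r < kap κ d r := by
        rw [hfr, hkd]
        rw [div_lt_div_iff₀ hbr (by positivity)]
        have hb'c2 : b' r < c r := by
          have h1 := hle r
          have h2 : b r ≤ c r := hbc r
          simp only [hd] at hdr
          linarith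
        nlinarith [mul_lt_mul_of_pos_left hb'c2 (mul_pos hdr hbr)]
      have hfr0 : 0 < f r := by rw [hfr]; positivity
      have hsq : f r ^ 2 ≤ kap κ d r ^ 2 := by nlinarith [hlt, hfr0]
      exact mul_le_mul_of_nonneg_left hsq (hb0 r)
    · -- d r = 0
      have hfr : f r = 0 := by
        simp only [hf]
        split
        · rfl
        · rw [← hdr, zero_div]
      rw [hfr]
      have := kap_nonneg hκ0 hd0 r
      nlinarith [hb0 r]
  obtain ⟨r0, hr0⟩ := hne
  have hdr0 : 0 < d r0 := by simp only [hd]; linarith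
  have hbr0 : 0 < b r0 := lt_of_lt_of_le hdr0 (by simp only [hd]; linarith [hb'0 r0])
  have hfr0 : 0 < f r0 := by
    simp only [hf]
    rw [if_neg (ne_of_gt hbr0)]
    positivity
  have hstrict : b r0 * f r0 ^ 2 < b r0 * (kap κ d r0) ^ 2 := by
    -- redo strictness at r0
    have hcr : 0 < c r0 := lt_of_lt_of_le hbr0 (hbc r0)
    have hid := sol_pair_identity ⟨hb0, hbc, heqb⟩ ⟨hb'0, hb'c, heqb'⟩ r0
    have hb'r : 0 < b' r0 := by
      rcases (hb'0 r0).lt_or_eq with h | h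
      · exact h
      · exfalso
        rw [← h] at hid
        simp only [mul_zero, zero_mul, sub_zero] at hid
        nlinarith [mul_pos hcr hbr0]
    have hkd : kap κ d r0 = c r0 * d r0 / (b r0 * b' r0) := by
      rw [eq_div_iff (by positivity)]
      simp only [hd]
      linear_combination -hid
    have hfr : f r0 = d r0 / b r0 := by
      simp only [hf]; rw [if_neg (ne_of_gt hbr0)]
    have hlt : f r0 < kap κ d r0 := by
      rw [hfr, hkd]
      rw [div_lt_div_iff₀ hbr0 (by positivity)]
      have hb'c2 : b' r0 < c r0 := by
        have h2 : b r0 ≤ c r0 := hbc r0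
        simp only [hd] at hdr0
        linarith
      nlinarith [mul_lt_mul_of_pos_left hb'c2 (mul_pos hdr0 hbr0)]
    have hsq : f r0 ^ 2 < kap κ d r0 ^ 2 := by nlinarith [hlt, hfr0]
    exact mul_lt_mul_of_pos_left hsq hbr0
  set N2 : ℝ := ∑ r : S, b r * f r ^ 2 with hN2
  have hN2pos : 0 < N2 := by
    rw [hN2]
    have h1 : 0 < b r0 * f r0 ^ 2 := by positivity
    have h2 : ∀ r ∈ Finset.univ, 0 ≤ b r * f r ^ 2 :=
      fun r _ => mul_nonneg (hb0 r) (sq_nonneg _)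
    exact lt_of_lt_of_le h1 (Finset.single_le_sum h2 (Finset.mem_univ r0))
  set Q : ℝ := ∑ r : S, b r * (kap κ d r) ^ 2 with hQ
  have hQN : N2 < Q := by
    rw [hN2, hQ]
    exact Finset.sum_lt_sum (fun r _ => hkey r) ⟨r0, Finset.mem_univ r0, hstrict⟩
  -- normalize
  have hsN : 0 < Real.sqrt N2 := Real.sqrt_pos.mpr hN2pos
  set g : S → ℝ := fun r => f r / Real.sqrt N2 with hg
  have hg0 : ∀ s, 0 ≤ g s := fun s => div_nonneg (hf0 s) hsN.le
  have hgnorm : (∑ r : S, b r * g r ^ 2) ≤ 1 := by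
    have hcalc : (∑ r : S, b r * g r ^ 2) = N2 / N2 := by
      calc (∑ r : S, b r * g r ^ 2) = ∑ r : S, (b r * f r ^ 2) / N2 := by
            refine Finset.sum_congr rfl fun r _ => ?_
            simp only [hg, div_pow]
            rw [Real.sq_sqrt hN2pos.le]
            ring
      _ = N2 / N2 := (Finset.sum_div Finset.univ (fun r => b r * f r ^ 2) N2).symm
    rw [hcalc, div_self (ne_of_gt hN2pos)]
  have hTg : ∀ r, (∑ s : S, κ r s * g s * b s) = kap κ d r / Real.sqrt N2 := by
    intro r
    simp only [hg]
    rw [← hTf r, Finset.sum_div]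
    exact Finset.sum_congr rfl fun s _ => by ring
  have hval : 1 < Real.sqrt (∑ r : S, b r * (∑ s : S, κ r s * g s * b s) ^ 2) := by
    have hsum : (∑ r : S, b r * (∑ s : S, κ r s * g s * b s) ^ 2) = Q / N2 := by
      calc (∑ r : S, b r * (∑ s : S, κ r s * g s * b s) ^ 2)
          = ∑ r : S, (b r * kap κ d r ^ 2) / N2 := by
            refine Finset.sum_congr rfl fun r _ => ?_
            rw [hTg r, div_pow, Real.sq_sqrt hN2pos.le]
            ring
      _ = Q / N2 := (Finset.sum_div Finset.univ (fun r => b r * kap κ d r ^ 2) N2).symm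
    rw [hsum]
    rw [show (1:ℝ) = Real.sqrt 1 from (Real.sqrt_one).symm]
    apply Real.sqrt_lt_sqrt (by norm_num)
    rw [lt_div_iff₀ hN2pos]
    linarith
  exact lt_of_lt_of_le hval (le_sigmaOp hκ0 hb0 hg0 hgnorm)

end FPSaux

namespace FPSaux

variable {S : Type*} [Fintype S] [DecidableEq S] [Nonempty S]
variable {κ : S → S → ℝ} {c : S → ℝ}

/-- In the irreducible case any nonzero fixed point is positive on the support of `c`. -/
lemma irred_pos (hκsym : ∀ r s, κ r s = κ s r) (hκ0 : ∀ r s, 0 ≤ κ r s)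
    (hc : ∀ r, 0 ≤ c r) (hirr : Irred κ c) {a : S → ℝ} (ha0 : ∀ r, 0 ≤ a r)
    (hafix : ∀ r, phi κ c a r = a r) (hane : ∃ r, 0 < a r) :
    ∀ r, 0 < c r → 0 < a r := by
  classical
  set A : Set S := {r | 0 < a r} with hA
  have hhyp : ∀ r ∈ A, ∀ s, s ∉ A → 0 < c r → 0 < c s → κ r s = 0 := by
    intro r hr s hs hcr hcs
    by_contra hκrs
    have hκpos : 0 < κ s r := by
      rw [hκsym s r]
      exact lt_of_le_of_ne (hκ0 r s) (Ne.symm hκrs)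
    have hkap : 0 < kap κ a s := by
      have h1 : κ s r * a r ≤ kap κ a s := by
        unfold kap
        exact Finset.single_le_sum (fun t _ => mul_nonneg (hκ0 s t) (ha0 t))
          (Finset.mem_univ r)
      have h2 : 0 < κ s r * a r := mul_pos hκpos hr
      linarith
    have : 0 < a s := by
      rw [← hafix s, phi]
      exact mul_pos hcs (div_pos hkap (by positivity))
    exact hs this
  rcases hirr A hhyp with h | h
  · exfalso
    obtain ⟨r, hr⟩ := hane
    have hcr : 0 < c r := by
      have := phi_le_c hκ0 hc ha0 r
      rw [hafix r] at this
      linarith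
    exact absurd (h r hr) (ne_of_gt hcr)
  · intro r hcr
    by_contra hr
    exact absurd (h r hr) (ne_of_gt hcr)

/-- Uniqueness of nonzero fixed points in the irreducible case. -/
lemma irred_unique (hκsym : ∀ r s, κ r s = κ s r) (hκ0 : ∀ r s, 0 ≤ κ r s)
    (hc : ∀ r, 0 ≤ c r) (hirr : Irred κ c) {a a' : S → ℝ}
    (ha0 : ∀ r, 0 ≤ a r) (ha'0 : ∀ r, 0 ≤ a' r)
    (hafix : ∀ r, phi κ c a r = a r) (ha'fix : ∀ r, phi κ c a' r = a' r)
    (hle : ∀ r, a r ≤ a' r) (hane : ∃ r, 0 < a r) : ∀ r, a r = a' r := by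
  classical
  by_contra hcon
  push_neg at hcon
  obtain ⟨r0, hr0ne⟩ := hcon
  have hr0 : a r0 < a' r0 := lt_of_le_of_ne (hle r0) hr0ne
  set d : S → ℝ := fun r => a' r - a r with hd
  have hd0 : ∀ r, 0 ≤ d r := fun r => by simp only [hd]; linarith [hle r]
  have ha_le_c : ∀ r, a r ≤ c r := by
    intro r
    have := phi_le_c hκ0 hc ha0 r
    rw [hafix r] at this; linarith
  have ha'_le_c : ∀ r, a' r ≤ c r := by
    intro r
    have := phi_le_c hκ0 hc ha'0 r
    rw [ha'fix r] at this; linarith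
  have hpos := irred_pos hκsym hκ0 hc hirr ha0 hafix hane
  -- pointwise inequality
  have hkey : ∀ r, d r * kap κ a r ≤ a r * kap κ d r := by
    intro r
    rcases (hc r).lt_or_eq with hcr | hcr
    · -- c r > 0
      have har : 0 < a r := hpos r hcr
      have hBr : 0 < c r - a r := by
        have := phi_lt_c hκ0 (c := c) ha0 hcr
        rw [hafix r] at this; linarith
      have hB'r : 0 < c r - a' r := by
        have := phi_lt_c hκ0 (c := c) ha'0 hcr
        rw [ha'fix r] at this; linarith
      have hx := fixed_cleared hκ0 ha0 (hafix r)
      have hx' := fixed_cleared hκ0 ha'0 (ha'fix r)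
      -- identity : c r * d r = (c r - a r) * (c r - a' r) * kap κ d r
      have hkd : kap κ d r = kap κ a' r - kap κ a r := by
        unfold kap
        rw [← Finset.sum_sub_distrib]
        exact Finset.sum_congr rfl fun s _ => by simp only [hd]; ring
      have hid : c r * d r = (c r - a r) * (c r - a' r) * kap κ d r := by
        rw [hkd]
        simp only [hd]
        linear_combination (c r - a' r) * hx - (c r - a r) * hx'
      have hfin : d r * kap κ a r * ((c r - a r) * (c r - a' r))
          ≤ a r * kap κ d r * ((c r - a r) * (c r - a' r)) := by
        have e1 : d r * kap κ a r * ((c r - a r) * (c r - a' r))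
            = d r * a r * (c r - a' r) := by
          linear_combination (d r * (c r - a' r)) * hx
        have e2 : a r * kap κ d r * ((c r - a r) * (c r - a' r))
            = a r * (c r * d r) := by
          linear_combination (-(a r)) * hid
        rw [e1, e2]
        nlinarith [mul_nonneg (mul_nonneg (hd0 r) har.le) (ha'0 r)]
      exact le_of_mul_le_mul_right hfin (by positivity)
    · -- c r = 0
      have har : a r = 0 := le_antisymm (by rw [hcr]; exact ha_le_c r) (ha0 r)
      have hdr : d r = 0 := by
        have h1 : a' r = 0 := le_antisymm (by rw [hcr]; exact ha'_le_c r) (ha'0 r)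
        simp only [hd, har, h1]; ring
      rw [har, hdr]
      ring_nf
      exact le_rfl
  -- strict inequality at r0
  have hstrict : d r0 * kap κ a r0 < a r0 * kap κ d r0 := by
    have hcr : 0 < c r0 := by
      have h2 := ha'_le_c r0
      have h3 := ha0 r0
      linarith
    have har : 0 < a r0 := hpos r0 hcr
    have hBr : 0 < c r0 - a r0 := by
      have := phi_lt_c hκ0 (c := c) ha0 hcr
      rw [hafix r0] at this; linarith
    have hB'r : 0 < c r0 - a' r0 := by
      have := phi_lt_c hκ0 (c := c) ha'0 hcr
      rw [ha'fix r0] at this; linarith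
    have hx := fixed_cleared hκ0 ha0 (hafix r0)
    have hx' := fixed_cleared hκ0 ha'0 (ha'fix r0)
    have hkd : kap κ d r0 = kap κ a' r0 - kap κ a r0 := by
      unfold kap
      rw [← Finset.sum_sub_distrib]
      exact Finset.sum_congr rfl fun s _ => by simp only [hd]; ring
    have hid : c r0 * d r0 = (c r0 - a r0) * (c r0 - a' r0) * kap κ d r0 := by
      rw [hkd]
      simp only [hd]
      linear_combination (c r0 - a' r0) * hx - (c r0 - a r0) * hx'
    have hdr0 : 0 < d r0 := by simp only [hd]; linarith
    have ha'pos : 0 < a' r0 := lt_of_lt_of_le har (hle r0)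
    have hfin : d r0 * kap κ a r0 * ((c r0 - a r0) * (c r0 - a' r0))
        < a r0 * kap κ d r0 * ((c r0 - a r0) * (c r0 - a' r0)) := by
      have e1 : d r0 * kap κ a r0 * ((c r0 - a r0) * (c r0 - a' r0))
          = d r0 * a r0 * (c r0 - a' r0) := by
        linear_combination (d r0 * (c r0 - a' r0)) * hx
      have e2 : a r0 * kap κ d r0 * ((c r0 - a r0) * (c r0 - a' r0))
          = a r0 * (c r0 * d r0) := by
        linear_combination (-(a r0)) * hid
      rw [e1, e2]
      nlinarith [mul_pos (mul_pos har hdr0) ha'pos]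
    exact lt_of_mul_lt_mul_right hfin (by positivity)
  -- contradiction via symmetry of the double sum
  have hsum : ∑ r : S, d r * kap κ a r = ∑ r : S, a r * kap κ d r :=
    kap_symm_sum hκsym d a
  have hlt : ∑ r : S, d r * kap κ a r < ∑ r : S, a r * kap κ d r :=
    Finset.sum_lt_sum (fun r _ => hkey r) ⟨r0, Finset.mem_univ r0, hstrict⟩
  rw [hsum] at hlt
  exact lt_irrefl _ hlt

end FPSaux

namespace FPSaux

variable {S : Type*} [Fintype S] [DecidableEq S] [Nonempty S]
variable {κ : S → S → ℝ} {c : S → ℝ}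

/-- At any nonzero fixed point the operator is at least critical. -/
lemma one_le_sigma (hκsym : ∀ r s, κ r s = κ s r) (hκ0 : ∀ r s, 0 ≤ κ r s)
    (hc : ∀ r, 0 ≤ c r) {a : S → ℝ} (ha0 : ∀ r, 0 ≤ a r)
    (hafix : ∀ r, phi κ c a r = a r) (hane : ∃ r, 0 < a r) :
    1 ≤ sigmaOp κ (fun r => c r - a r) := by
  classical
  set b' : S → ℝ := fun r => c r - a r with hb'
  have hb'0 : ∀ r, 0 ≤ b' r := by
    intro r
    have := phi_le_c hκ0 hc ha0 r
    rw [hafix r] at this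
    simp only [hb']; linarith
  set f : S → ℝ := fun r => kap κ a r with hfdef
  have hf0 : ∀ r, 0 ≤ f r := fun r => kap_nonneg hκ0 ha0 r
  have hfb : ∀ s, f s * b' s = a s := by
    intro s
    have := fixed_cleared hκ0 ha0 (hafix s)
    simp only [hfdef, hb']
    linarith [this]
  have hT : ∀ r, (∑ s : S, κ r s * f s * b' s) = f r := by
    intro r
    calc (∑ s : S, κ r s * f s * b' s) = ∑ s : S, κ r s * a s := by
          refine Finset.sum_congr rfl fun s _ => ?_
          rw [mul_assoc, hfb s]
    _ = f r := rfl
  obtain ⟨r0, hr0⟩ := hane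
  have hcr0 : 0 < c r0 := lt_of_lt_of_le hr0 (by
    have := phi_le_c hκ0 hc ha0 r0
    rw [hafix r0] at this
    linarith)
  have hb'r0 : 0 < b' r0 := by
    have := phi_lt_c hκ0 (c := c) ha0 hcr0
    rw [hafix r0] at this
    simp only [hb']; linarith
  have hfr0 : 0 < f r0 := by
    rcases (hf0 r0).lt_or_eq with h | h
    · exact h
    · exfalso
      have := hfb r0
      rw [← h, zero_mul] at this
      linarith
  set N2 : ℝ := ∑ r : S, b' r * f r ^ 2 with hN2
  have hN2pos : 0 < N2 := by
    rw [hN2]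
    have h1 : 0 < b' r0 * f r0 ^ 2 := by positivity
    exact lt_of_lt_of_le h1 (Finset.single_le_sum
      (fun r (_ : r ∈ Finset.univ) => mul_nonneg (hb'0 r) (sq_nonneg _))
      (Finset.mem_univ r0))
  have hsN : 0 < Real.sqrt N2 := Real.sqrt_pos.mpr hN2pos
  set g : S → ℝ := fun r => f r / Real.sqrt N2 with hg
  have hg0 : ∀ s, 0 ≤ g s := fun s => div_nonneg (hf0 s) hsN.le
  have hgsum : ∀ (h : S → ℝ), (∀ r, h r = f r) →
      (∑ r : S, b' r * (h r / Real.sqrt N2) ^ 2) = 1 := by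
    intro h hh
    have : (∑ r : S, b' r * (h r / Real.sqrt N2) ^ 2)
        = ∑ r : S, (b' r * f r ^ 2) / N2 := by
      refine Finset.sum_congr rfl fun r _ => ?_
      rw [hh r, div_pow, Real.sq_sqrt hN2pos.le]
      ring
    rw [this]
    calc (∑ r : S, (b' r * f r ^ 2) / N2) = N2 / N2 :=
          (Finset.sum_div Finset.univ (fun r => b' r * f r ^ 2) N2).symm
    _ = 1 := div_self (ne_of_gt hN2pos)
  have hgnorm : (∑ r : S, b' r * g r ^ 2) ≤ 1 := by
    have := hgsum f (fun r => rfl)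
    simp only [hg]
    rw [this]
  have hTg : ∀ r, (∑ s : S, κ r s * g s * b' s) = f r / Real.sqrt N2 := by
    intro r
    simp only [hg]
    rw [← hT r, Finset.sum_div]
    exact Finset.sum_congr rfl fun s _ => by ring
  have hval : Real.sqrt (∑ r : S, b' r * (∑ s : S, κ r s * g s * b' s) ^ 2) = 1 := by
    have : (∑ r : S, b' r * (∑ s : S, κ r s * g s * b' s) ^ 2) = 1 := by
      have h2 : (∑ r : S, b' r * (∑ s : S, κ r s * g s * b' s) ^ 2)
          = ∑ r : S, b' r * (f r / Real.sqrt N2) ^ 2 := by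
        refine Finset.sum_congr rfl fun r _ => by rw [hTg r]
      rw [h2]
      exact hgsum f fun r => rfl
    rw [this, Real.sqrt_one]
  calc (1:ℝ) = Real.sqrt (∑ r : S, b' r * (∑ s : S, κ r s * g s * b' s) ^ 2) :=
        hval.symm
  _ ≤ sigmaOp κ b' := le_sigmaOp hκ0 hb'0 hg0 hgnorm

end FPSaux


open FPSaux

/-- solutions of the fixed-point system. -/
theorem fixed_point_system_solutions
    {S : Type*} [Fintype S] [DecidableEq S] [Nonempty S]
    (κ : S → S → ℝ) (hκsym : ∀ r s, κ r s = κ s r) (hκ0 : ∀ r s, 0 ≤ κ r s)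
    (c : S → ℝ) (hc : ∀ r, 0 ≤ c r) :
    (Irred κ c → 1 < sigmaOp κ c →
        (∃! b : S → ℝ, IsFPSol κ c b ∧ b ≠ c) ∧
        ∀ b : S → ℝ, IsFPSol κ c b → b ≠ c → sigmaOp κ b = 1) ∧
      (sigmaOp κ c ≤ 1 → ∀ b : S → ℝ, IsFPSol κ c b → b = c) ∧
      (1 < sigmaOp κ c →
        (∃ b : S → ℝ, IsFPSol κ c b ∧ b ≠ c) ∧
        ∃ bmin : S → ℝ, IsFPSol κ c bmin ∧
          (∀ b : S → ℝ, IsFPSol κ c b → ∀ r, bmin r ≤ b r) ∧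
          sigmaOp κ bmin = 1 ∧
          ∀ b : S → ℝ, IsFPSol κ c b → b ≠ bmin → 1 < sigmaOp κ b) := by
  classical
  -- the maximal fixed point of phi
  have hA0 : ∀ r, 0 ≤ astar κ c r := astar_nonneg hκ0 hc
  have hAc : ∀ r, astar κ c r ≤ c r := astar_le_c hκ0 hc
  have hAfix : ∀ r, phi κ c (astar κ c) r = astar κ c r := astar_fixed hκ0 hc
  -- bmin
  set bm : S → ℝ := fun r => c r - astar κ c r with hbm
  have hbm_fun : (fun s => c s - bm s) = astar κ c := by
    funext s; simp only [hbm]; ring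
  have hbm_sol : IsFPSol κ c bm := by
    rw [isFPSol_iff hκ0 hc]
    refine ⟨?_, ?_, ?_, ?_⟩
    · intro r
      rw [show c r - bm r = astar κ c r by simp only [hbm]; ring]
      exact hA0 r
    · intro r; simp only [hbm]; linarith [hA0 r]
    · intro r; simp only [hbm]; linarith [hAc r]
    · intro r
      rw [hbm_fun]
      rw [show c r - bm r = astar κ c r by simp only [hbm]; ring]
      exact hAfix r
  -- every solution gives a fixed point of phi
  have sol_fix : ∀ b : S → ℝ, IsFPSol κ c b →
      (∀ r, 0 ≤ c r - b r) ∧ (∀ r, phi κ c (fun s => c s - b s) r = c r - b r) := by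
    intro b hb
    obtain ⟨h1, h2, h3, h4⟩ := (isFPSol_iff hκ0 hc b).mp hb
    exact ⟨h1, h4⟩
  -- minimality of bm among solutions
  have hbm_min : ∀ b : S → ℝ, IsFPSol κ c b → ∀ r, bm r ≤ b r := by
    intro b hb r
    obtain ⟨ha0', hfix'⟩ := sol_fix b hb
    have hle : (fun s => c s - b s) r ≤ astar κ c r :=
      le_astar hκ0 hc ha0' (fun r => le_of_eq (hfix' r).symm) r
    simp only [hbm]
    simp only at hle
    linarith
  -- the trivial solution
  have hcsol : IsFPSol κ c c := by
    refine ⟨hc, fun r => le_rfl, fun r => ?_⟩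
    have : ∀ s, κ r s * (c s - c s) = 0 := fun s => by ring
    rw [Finset.sum_congr rfl fun s _ => this s, Finset.sum_const_zero]
    ring
  -- Part (ii)
  have part2 : sigmaOp κ c ≤ 1 → ∀ b : S → ℝ, IsFPSol κ c b → b = c := by
    intro hσ b hb
    by_contra hbc
    have hle : ∀ r, b r ≤ c r := hb.2.1
    have hne : ∃ r, b r < c r := by
      obtain ⟨r, hr⟩ := Function.ne_iff.mp hbc
      exact ⟨r, lt_of_le_of_ne (hle r) hr⟩
    have := sigma_gt_one_of_two_sols hκsym hκ0 hc hcsol hb hle hne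
    linarith
  -- Part (iii) core
  have key : 1 < sigmaOp κ c →
      IsFPSol κ c bm ∧ bm ≠ c ∧ (∀ b : S → ℝ, IsFPSol κ c b → ∀ r, bm r ≤ b r) ∧
      sigmaOp κ bm = 1 ∧
      (∀ b : S → ℝ, IsFPSol κ c b → b ≠ bm → 1 < sigmaOp κ b) ∧
      (∃ r, 0 < astar κ c r) := by
    intro hσ
    -- existence: astar ≠ 0
    have hAne : ∃ r, 0 < astar κ c r := by
      obtain ⟨σ0, v, hσ0, hv0, hvne, hvsupp, hveig⟩ :=
        eigen_of_one_lt_sigmaOp hκsym hκ0 hc hσ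
      have hzfix : ∀ r, phi κ c (fun _ => (0:ℝ)) r = 0 := by
        intro r
        have hk : kap κ (fun _ => (0:ℝ)) r = 0 := by
          unfold kap
          exact Finset.sum_eq_zero fun s _ => by ring
        rw [phi, hk]
        norm_num
      obtain ⟨a0, ha00, ha0sub, ha0ge, r1, hr1⟩ :=
        pert_lemma hκsym hκ0 hc (a := fun _ => (0:ℝ)) (fun r => le_rfl) hzfix hσ0
          hv0 hvne
          (fun r h => hvsupp r (by simpa using h))
          (fun r => by
            have hfun : (fun s => c s - (fun _ : S => (0:ℝ)) s) = c := by
              funext s; simp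
            rw [hfun]; exact hveig r)
          (fun r _ => by
            unfold kap
            exact Finset.sum_eq_zero fun s _ => by ring)
      have := le_astar hκ0 hc ha00 ha0sub r1
      exact ⟨r1, by simpa using lt_of_lt_of_le hr1 this⟩
    have hbm_ne : bm ≠ c := by
      obtain ⟨r1, hr1⟩ := hAne
      intro hcon
      have := congrFun hcon r1
      simp only [hbm] at this
      linarith
    -- sigma at bm is ≥ 1
    have hge : 1 ≤ sigmaOp κ bm :=
      one_le_sigma hκsym hκ0 hc hA0 hAfix hAne
    -- sigma at bm is ≤ 1
    have hle1 : sigmaOp κ bm ≤ 1 := by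
      by_contra hgt
      push_neg at hgt
      have hbm0 : ∀ r, 0 ≤ bm r := hbm_sol.1
      obtain ⟨σ1, v, hσ1, hv0, hvne, hvsupp, hveig⟩ :=
        eigen_of_one_lt_sigmaOp hκsym hκ0 hbm0 hgt
      -- the exact eigenvector with eigenvalue 1
      set u : S → ℝ := fun r => Real.sqrt (bm r) * kap κ (astar κ c) r with hu
      have hu0 : ∀ r, 0 ≤ u r := fun r =>
        mul_nonneg (Real.sqrt_nonneg _) (kap_nonneg hκ0 hA0 r)
      have hbmk : ∀ s, bm s * kap κ (astar κ c) s = astar κ c s := by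
        intro s
        have := fixed_cleared hκ0 hA0 (hAfix s)
        simp only [hbm]
        linarith [this]
      have hLu : ∀ r, Lop κ bm u r = u r := by
        intro r
        unfold Lop
        calc (∑ s : S, Real.sqrt (bm r) * κ r s * Real.sqrt (bm s) * u s)
            = ∑ s : S, Real.sqrt (bm r) * (κ r s * astar κ c s) := by
              refine Finset.sum_congr rfl fun s _ => ?_
              simp only [hu]
              have h1 : Real.sqrt (bm s) * Real.sqrt (bm s) = bm s :=
                Real.mul_self_sqrt (hbm0 s)
              calc Real.sqrt (bm r) * κ r s * Real.sqrt (bm s) *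
                    (Real.sqrt (bm s) * kap κ (astar κ c) s)
                  = Real.sqrt (bm r) * (κ r s *
                    ((Real.sqrt (bm s) * Real.sqrt (bm s)) * kap κ (astar κ c) s)) := by
                    ring
              _ = Real.sqrt (bm r) * (κ r s * astar κ c s) := by
                    rw [h1, hbmk s]
        _ = Real.sqrt (bm r) * kap κ (astar κ c) r := by
              rw [← Finset.mul_sum]
              rfl
        _ = u r := rfl
      -- orthogonality
      have hsymm := Lop_symm_sum (ν := bm) hκsym v u
      have hlhs : ∑ r : S, Lop κ bm v r * u r = σ1 * ∑ r : S, v r * u r := by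
        rw [Finset.mul_sum]
        exact Finset.sum_congr rfl fun r _ => by rw [hveig r]; ring
      have hrhs : ∑ r : S, v r * Lop κ bm u r = ∑ r : S, v r * u r :=
        Finset.sum_congr rfl fun r _ => by rw [hLu r]
      rw [hlhs, hrhs] at hsymm
      have hvu : ∑ r : S, v r * u r = 0 := by
        have h2 : (σ1 - 1) * ∑ r : S, v r * u r = 0 := by
          linear_combination hsymm
        rcases mul_eq_zero.mp h2 with h | h
        · exact absurd h (by intro hh; linarith)
        · exact h
      have hterm : ∀ r, v r * u r = 0 := by
        intro r
        have := (Finset.sum_eq_zero_iff_of_nonneg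
          (fun r (_ : r ∈ Finset.univ) => mul_nonneg (hv0 r) (hu0 r))).mp hvu
        exact this r (Finset.mem_univ r)
      have hka : ∀ r, 0 < v r → kap κ (astar κ c) r = 0 := by
        intro r hvr
        have hur : u r = 0 := by
          rcases mul_eq_zero.mp (hterm r) with h | h
          · exact absurd h (ne_of_gt hvr)
          · exact h
        have hbmr : 0 < bm r := by
          rcases (hbm0 r).lt_or_eq with h | h
          · exact h
          · exact absurd (hvsupp r h.symm) (ne_of_gt hvr)
        simp only [hu] at hur
        rcases mul_eq_zero.mp hur with h | h
        · exact absurd h (ne_of_gt (Real.sqrt_pos.mpr hbmr))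
        · exact h
      -- perturbation contradiction
      obtain ⟨a0, ha00, ha0sub, ha0ge, r1, hr1⟩ :=
        pert_lemma hκsym hκ0 hc hA0 hAfix hσ1 hv0 hvne
          (fun r h => hvsupp r (by simp only [hbm]; exact h))
          (fun r => by
            have hfun : (fun s => c s - astar κ c s) = bm := by
              funext s; simp only [hbm]
            rw [hfun]; exact hveig r)
          hka
      have := le_astar hκ0 hc ha00 ha0sub r1
      linarith
    have hsig1 : sigmaOp κ bm = 1 := le_antisymm hle1 hge
    refine ⟨hbm_sol, hbm_ne, hbm_min, hsig1, ?_, hAne⟩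
    · intro b hb hbne
      have hle : ∀ r, bm r ≤ b r := hbm_min b hb
      have hne : ∃ r, bm r < b r := by
        obtain ⟨r, hr⟩ := Function.ne_iff.mp hbne
        exact ⟨r, lt_of_le_of_ne (hle r) (Ne.symm hr)⟩
      exact sigma_gt_one_of_two_sols hκsym hκ0 hc hb hbm_sol hle hne
  refine ⟨?_, part2, ?_⟩
  · -- Part (i)
    intro hirr hσ
    obtain ⟨hsol, hnec, hmin, hsig, hgt, hAne⟩ := key hσ
    have huniq : ∀ b : S → ℝ, IsFPSol κ c b → b ≠ c → b = bm := by
      intro b hb hbne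
      obtain ⟨ha0', hfix'⟩ := sol_fix b hb
      have hane : ∃ r, 0 < (fun s => c s - b s) r := by
        obtain ⟨r, hr⟩ := Function.ne_iff.mp hbne
        refine ⟨r, ?_⟩
        have h1 := ha0' r
        simp only at h1 ⊢
        rcases h1.lt_or_eq with h | h
        · exact h
        · exact absurd (by linarith : b r = c r) hr
      have hle : ∀ r, (fun s => c s - b s) r ≤ astar κ c r :=
        le_astar hκ0 hc ha0' (fun r => le_of_eq (hfix' r).symm)
      have := irred_unique hκsym hκ0 hc hirr ha0' hA0
        (fun r => hfix' r) hAfix hle hane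
      funext r
      have h2 := this r
      simp only [hbm]
      linarith
    constructor
    · refine ⟨bm, ⟨hsol, hnec⟩, ?_⟩
      intro y hy
      exact huniq y hy.1 hy.2
    · intro b hb hbne
      rw [huniq b hb hbne]
      exact hsig
  · -- Part (iii)
    intro hσ
    obtain ⟨hsol, hnec, hmin, hsig, hgt, hAne⟩ := key hσ
    exact ⟨⟨bm, hsol, hnec⟩, bm, hsol, hmin, hsig, hgt⟩



end
end
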